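/- arXiv:2511.22255 — 7 statements merged into one kernel-verified Lean document; each statement's English description precedes it below -/
import Mathlib

section
/- Let c_{j+3} := −( I_j/(j!·(j+3)) − I_{j+2}/(4·(j+3)!) )·B_{j+3} for j ≥ 1. Then limsup_{j→∞} |c_{j+3}|^{1/(j+3)} = ∞; equivalently, the formal power series Σ_{j≥1} c_{j+3} α^{j+3} has radius of convergence zero. -/
open MeasureTheory Filter
open Set Real

open MeasureTheory Filter
open Set Real

lemma image_exp_neg : (fun t : ℝ => Real.exp (-t)) '' Set.Ioi 0 = Set.Ioo 0 1 := by
  ext x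
  constructor
  · rintro ⟨t, ht, rfl⟩
    exact ⟨Real.exp_pos _, Real.exp_lt_one_iff.mpr (neg_neg_iff_pos.mpr ht)⟩
  · rintro ⟨hx0, hx1⟩
    exact ⟨-Real.log x, by simpa using Real.log_neg hx0 hx1, by simp [Real.exp_log hx0]⟩

lemma cov_deriv : ∀ x ∈ Set.Ioi (0:ℝ), HasDerivWithinAt (fun t : ℝ => Real.exp (-t))
    (Real.exp (-x) * (-1)) (Set.Ioi 0) x := fun x _ =>
  ((hasDerivAt_neg x).exp).hasDerivWithinAt

lemma cov_inj : Set.InjOn (fun t : ℝ => Real.exp (-t)) (Set.Ioi 0) :=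
  fun a _ b _ h => neg_injective (Real.exp_injective h)

lemma cov (g : ℝ → ℝ) : ∫ u in Set.Ioo (0:ℝ) 1, g u
    = ∫ t in Set.Ioi (0:ℝ), Real.exp (-t) * g (Real.exp (-t)) := by
  rw [← image_exp_neg,
    integral_image_eq_integral_abs_deriv_smul measurableSet_Ioi cov_deriv cov_inj g]
  refine setIntegral_congr_fun measurableSet_Ioi fun t _ => ?_
  simp [abs_of_pos (Real.exp_pos (-t)), smul_eq_mul]

lemma cov_integrable (g : ℝ → ℝ)
    (h : IntegrableOn (fun t => Real.exp (-t) * g (Real.exp (-t))) (Set.Ioi 0)) :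
    IntegrableOn g (Set.Ioo (0:ℝ) 1) := by
  rw [← image_exp_neg,
    integrableOn_image_iff_integrableOn_abs_deriv_smul measurableSet_Ioi cov_deriv cov_inj g]
  refine h.congr_fun (fun t _ => ?_) measurableSet_Ioi
  simp [abs_of_pos (Real.exp_pos (-t)), smul_eq_mul, mul_comm]

lemma gamma_int (j n : ℕ) :
    ∫ t in Set.Ioi (0:ℝ), t ^ j * Real.exp (-((2*(n:ℝ)+1) * t))
      = (j.factorial : ℝ) / (2*(n:ℝ)+1)^(j+1) := by
  have hr : (0:ℝ) < 2*(n:ℝ)+1 := by positivity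
  have ha : (0:ℝ) < (j:ℝ)+1 := by positivity
  have := integral_rpow_mul_exp_neg_mul_Ioi ha hr
  rw [show ((j:ℝ)+1)-1 = (j:ℝ) by ring] at this
  rw [show (∫ t in Set.Ioi (0:ℝ), t ^ j * Real.exp (-((2*(n:ℝ)+1) * t)))
      = ∫ t in Set.Ioi (0:ℝ), t ^ (j:ℝ) * Real.exp (-((2*(n:ℝ)+1) * t)) from
    setIntegral_congr_fun measurableSet_Ioi fun t ht =>
      by rw [Real.rpow_natCast], this]
  rw [Real.Gamma_nat_eq_factorial,
    show (1/(2*(n:ℝ)+1)) ^ ((j:ℝ)+1) = (1/(2*(n:ℝ)+1))^((j+1:ℕ)) by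
      rw [← Real.rpow_natCast (1/(2*(n:ℝ)+1)) (j+1)]; push_cast; ring_nf]
  rw [div_pow, one_pow]
  ring

lemma term_eval (j n : ℕ) :
    ∫ u in Set.Ioo (0:ℝ) 1, (-2 * Real.log u)^j * u^(2*n)
      = 2^j * (j.factorial : ℝ) / (2*(n:ℝ)+1)^(j+1) := by
  rw [cov]
  have : ∀ t ∈ Set.Ioi (0:ℝ),
      Real.exp (-t) * ((-2 * Real.log (Real.exp (-t)))^j * (Real.exp (-t))^(2*n))
        = 2^j * (t ^ j * Real.exp (-((2*(n:ℝ)+1) * t))) := by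
    intro t _
    rw [Real.log_exp,
      show -((2*(n:ℝ)+1) * t) = (-t) + (2*n:ℕ) * (-t) by push_cast; ring,
      Real.exp_add, Real.exp_nat_mul, show (-2:ℝ) * -t = 2 * t by ring]
    ring
  rw [setIntegral_congr_fun measurableSet_Ioi this, integral_const_mul, gamma_int]
  ring

lemma term_integrable (j n : ℕ) :
    IntegrableOn (fun u => (-2 * Real.log u)^j * u^(2*n)) (Set.Ioo (0:ℝ) 1) := by
  apply cov_integrable
  have base : IntegrableOn (fun t : ℝ => t ^ ((j:ℝ)) * Real.exp (-(2*(n:ℝ)+1) * t ^ (1:ℝ)))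
      (Set.Ioi 0) :=
    integrableOn_rpow_mul_exp_neg_mul_rpow (lt_of_lt_of_le (by norm_num) (Nat.cast_nonneg j)) zero_lt_one (by positivity)
  refine IntegrableOn.congr_fun (base.const_mul ((2:ℝ)^j)) (fun t ht => ?_) measurableSet_Ioi
  rw [Real.log_exp, Real.rpow_one, Real.rpow_natCast,
    show -(2*(n:ℝ)+1) * t = (-t) + (2*n:ℕ) * (-t) by push_cast; ring,
    Real.exp_add, Real.exp_nat_mul, show (-2:ℝ) * -t = 2 * t by ring]
  ring

noncomputable def S (k : ℕ) : ℝ := ∑' n : ℕ, 1 / (2*(n:ℝ)+1)^k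

lemma summable_S {k : ℕ} (hk : 2 ≤ k) : Summable (fun n : ℕ => 1 / (2*(n:ℝ)+1)^k) := by
  have h2 : Summable (fun n : ℕ => 1 / ((n:ℝ)+1)^2) := by
    have := (Real.summable_one_div_nat_pow (p := 2)).mpr (by norm_num)
    have := (summable_nat_add_iff (f := fun n : ℕ => 1 / (n:ℝ)^2) 1).mpr this
    simpa using this
  refine h2.of_nonneg_of_le (fun n => by positivity) (fun n => ?_)
  have h1 : ((n:ℝ)+1)^2 ≤ (2*(n:ℝ)+1)^2 := by nlinarith [Nat.cast_nonneg (α := ℝ) n]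
  have h2' : (2*(n:ℝ)+1)^2 ≤ (2*(n:ℝ)+1)^k :=
    pow_le_pow_right₀ (by nlinarith [Nat.cast_nonneg (α := ℝ) n]) hk
  exact one_div_le_one_div_of_le (by positivity) (h1.trans h2')

lemma S_pos_terms (k : ℕ) (n : ℕ) : (0:ℝ) ≤ 1 / (2*(n:ℝ)+1)^k := by positivity

/-- `I j = ∫₀¹ (log(u²))^j / (1-u²) du`. -/
noncomputable def I (j : ℕ) : ℝ :=
  ∫ u in Set.Ioo (0:ℝ) 1, (Real.log (u^2))^j / (1 - u^2)

lemma I_eval (j : ℕ) (hj : 1 ≤ j) :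
    I j = (-1)^j * 2^j * (j.factorial : ℝ) * S (j+1) := by
  have hterm_nonneg : ∀ n : ℕ, ∀ u ∈ Set.Ioo (0:ℝ) 1,
      (0:ℝ) ≤ (-2 * Real.log u)^j * u^(2*n) := by
    intro n u hu
    have hlog : Real.log u < 0 := Real.log_neg hu.1 hu.2
    have h2 : (0:ℝ) ≤ -2 * Real.log u := by nlinarith
    exact mul_nonneg (pow_nonneg h2 j) (pow_nonneg hu.1.le _)
  -- step 1: rewrite integrand
  have step1 : I j = (-1)^j * ∫ u in Set.Ioo (0:ℝ) 1,
      ∑' n : ℕ, (-2 * Real.log u)^j * u^(2*n) := by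
    rw [I, ← integral_const_mul]
    refine setIntegral_congr_fun measurableSet_Ioo fun u hu => ?_
    have hu2 : u^2 < 1 := by nlinarith [hu.1, hu.2]
    have hu2' : (0:ℝ) ≤ u^2 := sq_nonneg u
    have hgeom : ∑' n : ℕ, (u^2)^n = (1 - u^2)⁻¹ :=
      tsum_geometric_of_lt_one hu2' hu2
    have : ∑' n : ℕ, (-2 * Real.log u)^j * u^(2*n)
        = (-2 * Real.log u)^j * (1 - u^2)⁻¹ := by
      rw [← hgeom, ← tsum_mul_left]
      exact tsum_congr fun n => by rw [pow_mul]
    rw [this, Real.log_pow]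
    push_cast
    rw [show (2:ℝ) * Real.log u = (-1) * (-2 * Real.log u) by ring, mul_pow]
    rw [div_eq_mul_inv]
    ring
  -- step 2: swap integral and tsum
  have hmeas : ∀ n : ℕ, AEStronglyMeasurable (fun u : ℝ => (-2 * Real.log u)^j * u^(2*n))
      (volume.restrict (Set.Ioo (0:ℝ) 1)) :=
    fun n => (term_integrable j n).aestronglyMeasurable
  have hsummable : Summable (fun n : ℕ => 2^j * (j.factorial : ℝ) / (2*(n:ℝ)+1)^(j+1)) := by
    have := (summable_S (k := j+1) (by omega)).mul_left (2^j * (j.factorial : ℝ))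
    refine this.congr fun n => ?_
    rw [mul_one_div]
  have hlint : ∑' n : ℕ, ∫⁻ u in Set.Ioo (0:ℝ) 1,
      ‖(-2 * Real.log u)^j * u^(2*n)‖₊ ≠ ⊤ := by
    have heach : ∀ n : ℕ, ∫⁻ u in Set.Ioo (0:ℝ) 1, ‖(-2 * Real.log u)^j * u^(2*n)‖₊
        = ENNReal.ofReal (2^j * (j.factorial : ℝ) / (2*(n:ℝ)+1)^(j+1)) := by
      intro n
      erw [← ofReal_integral_norm_eq_lintegral_enorm (term_integrable j n)]
      congr 1
      rw [← term_eval j n]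
      refine setIntegral_congr_fun measurableSet_Ioo fun u hu => ?_
      exact Real.norm_of_nonneg (hterm_nonneg _ u hu)
    rw [tsum_congr heach, ← ENNReal.ofReal_tsum_of_nonneg (fun n => by positivity) hsummable]
    exact ENNReal.ofReal_ne_top
  have hS : ∑' n : ℕ, 2^j * (j.factorial : ℝ) / (2*(n:ℝ)+1)^(j+1)
      = 2^j * (j.factorial : ℝ) * S (j+1) := by
    rw [S, ← tsum_mul_left]
    exact tsum_congr fun n => (mul_one_div _ _).symm
  rw [step1, integral_tsum hmeas hlint, tsum_congr (fun n => term_eval j n), hS]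
  ring

lemma S_diff_lower (j : ℕ) (hj : 1 ≤ j) : 1/(3:ℝ)^(j+1) - 1/(3:ℝ)^(j+3) ≤ S (j+1) - S (j+3) := by
  have h1 := summable_S (k := j+1) (by omega)
  have h3 := summable_S (k := j+3) (by omega)
  rw [S, S, ← (h1.hasSum.sub h3.hasSum).tsum_eq]
  have hle := Summable.le_tsum (h1.sub h3) 1 (fun n _ => ?_)
  · refine le_trans (le_of_eq ?_) hle
    norm_num
  · have hX : (1:ℝ) ≤ 2*(n:ℝ)+1 := by linarith [Nat.cast_nonneg (α := ℝ) n]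
    have : (2*(n:ℝ)+1)^(j+1) ≤ (2*(n:ℝ)+1)^(j+3) := pow_le_pow_right₀ hX (by omega)
    have r1 : (0:ℝ) < (2*(n:ℝ)+1)^(j+1) := by positivity
    have := one_div_le_one_div_of_le r1 this
    linarith

lemma bern_lower (k : ℕ) (hk : k ≠ 0) :
    ((2*k).factorial : ℝ) / (2^(2*k-1) * Real.pi^(2*k)) ≤ |((bernoulli (2*k) : ℚ) : ℝ)| := by
  have hsum := hasSum_zeta_nat hk
  set A : ℝ := (-1 : ℝ) ^ (k + 1) * (2 : ℝ) ^ (2 * k - 1) * Real.pi ^ (2 * k) *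
      ((bernoulli (2 * k) : ℚ) : ℝ) / ((2*k).factorial : ℝ) with hA
  have h1 : (1:ℝ) ≤ A := by
    have := le_hasSum hsum 1 (fun i _ => by positivity)
    simpa using this
  have h2 : A ≤ |A| := le_abs_self A
  have h3 : |A| = 2 ^ (2*k-1) * Real.pi ^ (2*k) * |((bernoulli (2*k) : ℚ) : ℝ)|
      / ((2*k).factorial : ℝ) := by
    rw [hA, abs_div, abs_mul, abs_mul, abs_mul, abs_pow, abs_neg, abs_one, one_pow, one_mul,
      abs_pow, abs_pow, Nat.abs_cast, abs_of_pos Real.pi_pos]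
    norm_num
  have hfac : (0:ℝ) < ((2*k).factorial : ℝ) := by positivity
  have hpi : (0:ℝ) < Real.pi := Real.pi_pos
  rw [div_le_iff₀ (by positivity)]
  rw [h3] at h2
  have := h1.trans h2
  rw [le_div_iff₀ hfac] at this
  linarith [this]


/-- The coefficient `c_{j+3} = -( I_j/(j!·(j+3)) - I_{j+2}/(4·(j+3)!) )·B_{j+3}`. -/
noncomputable def c (j : ℕ) : ℝ :=
  -(I j / ((j.factorial : ℝ) * ((j:ℝ)+3)) - I (j+2) / (4 * ((j+3).factorial : ℝ)))
    * ((bernoulli (j+3) : ℚ) : ℝ)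

lemma D_eval (j : ℕ) (hj : 1 ≤ j) :
    I j / ((j.factorial : ℝ) * ((j:ℝ)+3)) - I (j+2) / (4 * ((j+3).factorial : ℝ))
      = (-1)^j * 2^j * (S (j+1) - S (j+3)) / ((j:ℝ)+3) := by
  rw [I_eval j hj, I_eval (j+2) (by omega)]
  have hf3 : ((j+3).factorial : ℝ) = ((j:ℝ)+3) * ((j+2).factorial : ℝ) := by
    rw [show j+3 = (j+2)+1 from rfl, Nat.factorial_succ]
    push_cast; ring
  have h1 : (j.factorial : ℝ) ≠ 0 := by positivity
  have h2 : ((j+2).factorial : ℝ) ≠ 0 := by positivity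
  have h3 : ((j:ℝ)+3) ≠ 0 := by positivity
  have h4 : ((j+2).factorial : ℝ) = ((j:ℝ)+2) * (((j:ℝ)+1) * (j.factorial : ℝ)) := by
    rw [show j+2 = (j+1)+1 from rfl, Nat.factorial_succ, Nat.factorial_succ]
    push_cast; ring
  rw [hf3, h4, pow_add, pow_add]
  field_simp
  ring

lemma c_abs (j : ℕ) (hj : 1 ≤ j) :
    |c j| = 2^j / ((j:ℝ)+3) * (S (j+1) - S (j+3)) * |((bernoulli (j+3) : ℚ) : ℝ)| := by
  have hΔpos : (0:ℝ) < 1/(3:ℝ)^(j+1) - 1/(3:ℝ)^(j+3) := by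
    have : (3:ℝ)^(j+1) < (3:ℝ)^(j+3) := pow_lt_pow_right₀ (by norm_num) (by omega)
    have h1 : (0:ℝ) < (3:ℝ)^(j+1) := by positivity
    have := one_div_lt_one_div_of_lt h1 this
    linarith
  have hΔ : (0:ℝ) ≤ S (j+1) - S (j+3) := le_trans hΔpos.le (S_diff_lower j hj)
  rw [c, D_eval j hj, abs_mul, abs_neg, abs_div, abs_mul, abs_mul, abs_pow, abs_pow,
    abs_neg, abs_one, one_pow, one_mul, abs_two, abs_of_nonneg hΔ,
    abs_of_pos (show (0:ℝ) < (j:ℝ)+3 by positivity)]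
  ring

lemma c_lower {j : ℕ} (hodd : Odd j) :
    2 * ((j+3).factorial : ℝ) / ((3*Real.pi)^(j+3) * ((j:ℝ)+3)) ≤ |c j| := by
  obtain ⟨m, hm⟩ := hodd
  have hj : 1 ≤ j := by omega
  have hB := bern_lower (m+2) (by omega)
  rw [show 2*(m+2) = j+3 by omega] at hB
  rw [show j+3-1 = j+2 by omega] at hB
  have hΔ := S_diff_lower j hj
  rw [c_abs j hj]
  have hpi : (0:ℝ) < Real.pi := Real.pi_pos
  calc 2 * ((j+3).factorial : ℝ) / ((3*Real.pi)^(j+3) * ((j:ℝ)+3))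
      = 2^j / ((j:ℝ)+3) * (1/(3:ℝ)^(j+1) - 1/(3:ℝ)^(j+3))
        * (((j+3).factorial : ℝ) / (2^(j+2) * Real.pi^(j+3))) := by
        rw [mul_pow]
        rw [show j+3 = j+3 from rfl]
        field_simp
        ring
    _ ≤ 2^j / ((j:ℝ)+3) * (S (j+1) - S (j+3)) * |((bernoulli (j+3) : ℚ) : ℝ)| := by
        have hΔpos : (0:ℝ) < 1/(3:ℝ)^(j+1) - 1/(3:ℝ)^(j+3) := by
          have : (3:ℝ)^(j+1) < (3:ℝ)^(j+3) := pow_lt_pow_right₀ (by norm_num) (by omega)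
          have h1 : (0:ℝ) < (3:ℝ)^(j+1) := by positivity
          have := one_div_lt_one_div_of_lt h1 this
          linarith
        have h0 : (0:ℝ) ≤ 2^j / ((j:ℝ)+3) := by positivity
        refine mul_le_mul (mul_le_mul le_rfl hΔ hΔpos.le h0) hB (by positivity)
          (mul_nonneg h0 (le_trans hΔpos.le hΔ))

/-- `limsup_{j→∞} |c_{j+3}|^{1/(j+3)} = ∞`, i.e. the power series
`Σ_{j≥1} c_{j+3} α^{j+3}` has radius of convergence zero. -/
theorem limsup_c_top :
    limsup (fun j : ℕ => ENNReal.ofReal (|c j| ^ ((1:ℝ)/((j:ℝ)+3)))) atTop = ⊤ := by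
  by_contra h
  set f : ℕ → ENNReal := fun j => ENNReal.ofReal (|c j| ^ ((1:ℝ)/((j:ℝ)+3))) with hf
  have hlt : limsup f atTop < ⊤ := lt_top_iff_ne_top.mpr h
  have hCne : limsup f atTop + 1 ≠ ⊤ := ENNReal.add_ne_top.mpr ⟨hlt.ne, ENNReal.one_ne_top⟩
  have hC : limsup f atTop < limsup f atTop + 1 := ENNReal.lt_add_right hlt.ne one_ne_zero
  have hev : ∀ᶠ j in atTop, f j < limsup f atTop + 1 := eventually_lt_of_limsup_lt hC
  set M := (limsup f atTop + 1).toReal with hM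
  have hM0 : 0 ≤ M := ENNReal.toReal_nonneg
  have hpi : (0:ℝ) < Real.pi := Real.pi_pos
  have hev2 : ∀ᶠ j in atTop, |c j| ≤ M^(j+3) := by
    refine hev.mono fun j hj => ?_
    have h1 : |c j| ^ ((1:ℝ)/((j:ℝ)+3)) < M :=
      (ENNReal.ofReal_lt_iff_lt_toReal (by positivity) hCne).mp hj
    have hne : ((j:ℝ)+3) ≠ 0 := by positivity
    have hid : (|c j| ^ ((1:ℝ)/((j:ℝ)+3)))^(j+3) = |c j| := by
      rw [← Real.rpow_natCast (|c j| ^ ((1:ℝ)/((j:ℝ)+3))) (j+3), ← Real.rpow_mul (abs_nonneg _)]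
      rw [show ((j+3:ℕ):ℝ) = (j:ℝ)+3 by push_cast; ring, one_div_mul_cancel hne, Real.rpow_one]
    calc |c j| = (|c j| ^ ((1:ℝ)/((j:ℝ)+3)))^(j+3) := hid.symm
      _ ≤ M^(j+3) := pow_le_pow_left₀ (Real.rpow_nonneg (abs_nonneg _) _) h1.le _
  have hfac : Tendsto (fun n : ℕ => (6*Real.pi*(M+1))^n / (n.factorial : ℝ)) atTop (nhds 0) :=
    FloorSemiring.tendsto_pow_div_factorial_atTop _
  have hev3 : ∀ᶠ n in atTop, (6*Real.pi*(M+1))^n < (n.factorial : ℝ) := by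
    refine (hfac.eventually (eventually_lt_nhds zero_lt_one)).mono fun n hn => ?_
    have hfc : (0:ℝ) < (n.factorial : ℝ) := by positivity
    rw [div_lt_one hfc] at hn
    exact hn
  obtain ⟨a1, ha1⟩ := eventually_atTop.mp hev2
  obtain ⟨a2, ha2⟩ := eventually_atTop.mp hev3
  set j := 2*(a1+a2)+1 with hjdef
  have hodd : Odd j := ⟨a1+a2, by omega⟩
  have hcl := c_lower hodd
  have h2 := ha1 j (by omega)
  have h3 := ha2 (j+3) (by omega)
  set n := j+3 with hn
  -- (6π(M+1))^n ≥ (3π)^n * (M^n * n)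
  have hkey : (3*Real.pi)^n * (M^n * (n:ℝ)) ≤ (6*Real.pi*(M+1))^n := by
    have e1 : (6*Real.pi*(M+1))^n = (3*Real.pi)^n * ((M+1)^n * 2^n) := by
      rw [← mul_pow, ← mul_pow]; ring_nf
    rw [e1]
    have hMn : M^n ≤ (M+1)^n := pow_le_pow_left₀ hM0 (by linarith) n
    have h2n : (n:ℝ) ≤ 2^n := by
      exact_mod_cast (Nat.lt_two_pow_self (n := n)).le
    have : M^n * (n:ℝ) ≤ (M+1)^n * 2^n := by
      apply mul_le_mul hMn h2n (by positivity) (by positivity)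
    nlinarith [pow_pos (show (0:ℝ) < 3*Real.pi by positivity) n]
  have hfgt : (3*Real.pi)^n * (M^n * (n:ℝ)) < (n.factorial : ℝ) := lt_of_le_of_lt hkey h3
  have hnpos : (0:ℝ) < (n:ℝ) := by positivity
  have h3pin : (0:ℝ) < (3*Real.pi)^n := by positivity
  have hdivgt : M^n < (n.factorial : ℝ) / ((3*Real.pi)^n * (n:ℝ)) := by
    rw [lt_div_iff₀ (by positivity)]
    calc M^n * ((3*Real.pi)^n * (n:ℝ)) = (3*Real.pi)^n * (M^n * (n:ℝ)) := by ring
      _ < (n.factorial : ℝ) := hfgt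
  have hMn0 : (0:ℝ) ≤ M^n := by positivity
  have hcontra : M^n < |c j| := by
    calc M^n < (n.factorial : ℝ) / ((3*Real.pi)^n * (n:ℝ)) := hdivgt
      _ ≤ 2 * (n.factorial : ℝ) / ((3*Real.pi)^n * (n:ℝ)) := by
          rw [div_le_div_iff_of_pos_right (by positivity)]  -- maybe wrong name
          linarith [hdivgt, hMn0]
      _ = 2 * ((j+3).factorial : ℝ) / ((3*Real.pi)^(j+3) * ((j:ℝ)+3)) := by
          rw [hn]; push_cast; ring
      _ ≤ |c j| := hcl
  rw [hn] at hcontra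
  exact absurd h2 (not_le.mpr hcontra)
end

section
/- For each natural number k ≥ 0 there exists a constant Λ_k > 0, independent of α, such that for every α ∈ (0,1] and every u with 0 < u ≤ e^{−π/(2α)}: | (1/(1−u²))·( Σ_{n=0}^∞ α^{k+1} n^k u^{2nα} − Σ_{n=0}^∞ n^k u^{2n} − B_{k+1}(1−α^{k+1})/(k+1) ) | ≤ Λ_k. -/
open Real

private lemma geom_sum_bound (k : ℕ) {x : ℝ} (hx0 : 0 ≤ x) (hx : x ≤ Real.exp (-Real.pi)) :
    |∑' n : ℕ, (n:ℝ)^k * x^n| ≤ ∑' n : ℕ, (n:ℝ)^k * (Real.exp (-Real.pi))^n := by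
  have hr1 : Real.exp (-Real.pi) < 1 := by
    rw [Real.exp_lt_one_iff]; linarith [Real.pi_pos]
  have hs1 : Summable (fun n : ℕ => (n:ℝ)^k * x^n) :=
    summable_pow_mul_geometric_of_norm_lt_one k
      (by rw [Real.norm_eq_abs, abs_of_nonneg hx0]; exact lt_of_le_of_lt hx hr1)
  have hs2 : Summable (fun n : ℕ => (n:ℝ)^k * (Real.exp (-Real.pi))^n) :=
    summable_pow_mul_geometric_of_norm_lt_one k
      (by rw [Real.norm_eq_abs, abs_of_nonneg (Real.exp_pos _).le]; exact hr1)
  rw [abs_of_nonneg (tsum_nonneg (fun n => by positivity))]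
  refine Summable.tsum_le_tsum (fun n => ?_) hs1 hs2
  exact mul_le_mul_of_nonneg_left (pow_le_pow_left₀ hx0 hx n) (by positivity)

/-- Uniform bound for `α·ĥ_{k,α}(1-u²)` on `0 < u ≤ e^{-π/(2α)}`, `0 < α ≤ 1`. -/
theorem uniform_bound_hhat (k : ℕ) :
    ∃ Λ : ℝ, 0 < Λ ∧ ∀ α : ℝ, 0 < α → α ≤ 1 →
      ∀ u : ℝ, 0 < u → u ≤ Real.exp (-(Real.pi/(2*α))) →
        |(1/(1-u^2)) * ((∑' n : ℕ, α^(k+1) * (n:ℝ)^k * u ^ (2*(n:ℝ)*α))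
          - (∑' n : ℕ, (n:ℝ)^k * u^(2*n))
          - ((bernoulli (k+1) : ℚ) : ℝ) * (1 - α^(k+1)) / ((k:ℝ)+1))| ≤ Λ := by
  set r : ℝ := Real.exp (-Real.pi) with hr_def
  have hr0 : 0 < r := Real.exp_pos _
  have hrhalf : r ≤ 1/2 := by
    have h1 : r ≤ Real.exp (-1) := Real.exp_le_exp.2 (by linarith [Real.pi_gt_three])
    have h2 : (2:ℝ) ≤ Real.exp 1 := by linarith [Real.add_one_le_exp 1]
    have : Real.exp (-1) = (Real.exp 1)⁻¹ := by rw [Real.exp_neg]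
    rw [this] at h1
    have : (Real.exp 1)⁻¹ ≤ 1/2 := by
      rw [inv_le_comm₀ (Real.exp_pos 1) (by norm_num)]
      linarith
    linarith
  set M : ℝ := ∑' n : ℕ, (n:ℝ)^k * r^n with hM_def
  have hM0 : 0 ≤ M := tsum_nonneg (fun n => by positivity)
  set B : ℝ := |((bernoulli (k+1) : ℚ) : ℝ)| with hB_def
  refine ⟨2*(2*M + B) + 1, by positivity, ?_⟩
  intro α hα hα1 u hu hue
  -- basic bounds
  have hπα : Real.pi / 2 ≤ Real.pi / (2*α) := by
    rw [div_le_div_iff₀ (by norm_num) (by positivity)]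
    nlinarith [Real.pi_pos]
  have hu2 : u^2 ≤ r := by
    have h1 : u ≤ Real.exp (-(Real.pi/2)) := le_trans hue (Real.exp_le_exp.2 (by linarith))
    have h2 : u^2 ≤ (Real.exp (-(Real.pi/2)))^2 := by
      apply pow_le_pow_left₀ hu.le h1
    calc u^2 ≤ (Real.exp (-(Real.pi/2)))^2 := h2
      _ = r := by rw [hr_def, ← Real.exp_nat_mul]; norm_num; ring_nf
  have h1u2 : (1:ℝ)/2 ≤ 1 - u^2 := by linarith
  have hinv : 1/(1-u^2) ≤ 2 := by
    rw [div_le_iff₀ (by linarith)]; linarith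
  have hinv0 : 0 ≤ 1/(1-u^2) := by positivity
  -- x := u^(2α)
  set x : ℝ := u ^ (2*α : ℝ) with hx_def
  have hx0 : 0 ≤ x := Real.rpow_nonneg hu.le _
  have hxr : x ≤ r := by
    have : x ≤ (Real.exp (-(Real.pi/(2*α)))) ^ (2*α : ℝ) :=
      Real.rpow_le_rpow hu.le hue (by positivity)
    calc x ≤ (Real.exp (-(Real.pi/(2*α)))) ^ (2*α : ℝ) := this
      _ = Real.exp (-(Real.pi/(2*α)) * (2*α)) := (Real.exp_mul _ _).symm
      _ = r := by rw [hr_def]; congr 1; field_simp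
  -- rewrite first tsum
  have hrw : (∑' n : ℕ, α^(k+1) * (n:ℝ)^k * u ^ (2*(n:ℝ)*α))
      = α^(k+1) * ∑' n : ℕ, (n:ℝ)^k * x^n := by
    rw [← tsum_mul_left]
    congr 1; funext n
    rw [mul_assoc]
    congr 1
    congr 1
    rw [hx_def, ← Real.rpow_natCast (u ^ (2*α:ℝ)) n, ← Real.rpow_mul hu.le]
    congr 1; ring
  have hrw2 : (∑' n : ℕ, (n:ℝ)^k * u^(2*n)) = ∑' n : ℕ, (n:ℝ)^k * (u^2)^n := by
    congr 1; funext n; rw [← pow_mul]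
  have hA : |∑' n : ℕ, α^(k+1) * (n:ℝ)^k * u ^ (2*(n:ℝ)*α)| ≤ M := by
    rw [hrw, abs_mul]
    have h1 : |α^(k+1)| ≤ 1 := by
      rw [abs_of_nonneg (by positivity)]
      exact pow_le_one₀ hα.le hα1
    have h2 : |∑' n : ℕ, (n:ℝ)^k * x^n| ≤ M := geom_sum_bound k hx0 hxr
    calc |α^(k+1)| * |∑' n : ℕ, (n:ℝ)^k * x^n| ≤ 1 * M := by
          apply mul_le_mul h1 h2 (abs_nonneg _) zero_le_one
      _ = M := one_mul M
  have hBsum : |∑' n : ℕ, (n:ℝ)^k * u^(2*n)| ≤ M := by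
    rw [hrw2]; exact geom_sum_bound k (by positivity) hu2
  have hC : |((bernoulli (k+1) : ℚ) : ℝ) * (1 - α^(k+1)) / ((k:ℝ)+1)| ≤ B := by
    rw [abs_div, abs_mul]
    have h1 : |1 - α^(k+1)| ≤ 1 := by
      rw [abs_of_nonneg (by nlinarith [pow_le_one₀ (n := k+1) hα.le hα1])]
      nlinarith [pow_pos hα (k+1)]
    have h2 : (1:ℝ) ≤ |(k:ℝ)+1| := by
      rw [abs_of_nonneg (by positivity)]; simp
    calc |((bernoulli (k+1) : ℚ) : ℝ)| * |1 - α^(k+1)| / |(k:ℝ)+1|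
        ≤ B * 1 / 1 := by
          apply div_le_div₀ (by positivity) _ one_pos h2
          exact mul_le_mul_of_nonneg_left h1 (abs_nonneg _)
      _ = B := by ring
  rw [abs_mul, abs_of_nonneg (by linarith : (0:ℝ) ≤ 1/(1-u^2))]
  calc 1/(1-u^2) * |_| ≤ 2 * (M + M + B) := by
        apply mul_le_mul hinv ?_ (abs_nonneg _) (by norm_num)
        calc |(∑' n : ℕ, α^(k+1) * (n:ℝ)^k * u ^ (2*(n:ℝ)*α))
              - (∑' n : ℕ, (n:ℝ)^k * u^(2*n))
              - ((bernoulli (k+1) : ℚ) : ℝ) * (1 - α^(k+1)) / ((k:ℝ)+1)|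
            ≤ |(∑' n : ℕ, α^(k+1) * (n:ℝ)^k * u ^ (2*(n:ℝ)*α))
              - (∑' n : ℕ, (n:ℝ)^k * u^(2*n))|
              + |((bernoulli (k+1) : ℚ) : ℝ) * (1 - α^(k+1)) / ((k:ℝ)+1)| := abs_sub _ _
          _ ≤ (|(∑' n : ℕ, α^(k+1) * (n:ℝ)^k * u ^ (2*(n:ℝ)*α))|
              + |(∑' n : ℕ, (n:ℝ)^k * u^(2*n))|) + B := by
              gcongr
              exact abs_sub _ _
          _ ≤ M + M + B := by
              have := hA; have := hBsum; gcongr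
    _ ≤ 2*(2*M + B) + 1 := by linarith
end

section
/- Let α > 0 and let z ∈ ℂ satisfy 0 < |z| < 1 and |Log(1−z)| < 2π/α, where Log is the principal branch of the complex logarithm. Then exp(α·Log(1−z)) ≠ 1 and 1/(1 − exp(α·Log(1−z))) = −1/(α·Log(1−z)) − (1/α)·Σ_{j=0}^∞ ( B_{j+1}/(j+1)! ) · α^{j+1} · (Log(1−z))^j, the series converging absolutely. -/
open Real Finset

private lemma bern_abs_le (n : ℕ) :
    |((bernoulli n : ℚ) : ℝ)| / n.factorial ≤ 4 / (2 * π) ^ n := by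
  have hπ : (0:ℝ) < 2 * π := by positivity
  have hπ4 : π < 3.15 := Real.pi_lt_d2
  match n with
  | 0 => norm_num
  | 1 =>
      rw [bernoulli_one]
      push_cast
      rw [show |(-1/2 : ℝ)| = 1/2 by norm_num, pow_one, Nat.factorial_one,
        Nat.cast_one, div_one, le_div_iff₀ hπ]
      nlinarith [Real.pi_pos]
  | (n+2) =>
      rcases Nat.even_or_odd (n+2) with he | ho
      · obtain ⟨k, hk⟩ := he
        have hk2 : n + 2 = 2 * k := by omega
        have hkne : k ≠ 0 := by omega
        rw [hk2]
        have hS := hasSum_zeta_nat hkne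
        set B : ℝ := ((bernoulli (2*k) : ℚ) : ℝ) with hB
        set E : ℝ := (-1 : ℝ) ^ (k + 1) * (2 : ℝ) ^ (2 * k - 1) * π ^ (2 * k) * B / ((2*k).factorial : ℝ) with hE
        have hE0 : 0 ≤ E := hS.nonneg (fun m => by positivity)
        have hE2 : E ≤ 2 := by
          have hle : E ≤ π ^ 2 / 6 := by
            refine hasSum_le (fun m => ?_) hS hasSum_zeta_two
            rcases Nat.eq_zero_or_pos m with rfl | hm
            · rw [Nat.cast_zero, zero_pow (by omega), zero_pow (by norm_num), div_zero]
            · apply one_div_le_one_div_of_le (by positivity)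
              have hm1 : (1:ℝ) ≤ (m:ℝ) := by exact_mod_cast hm
              calc ((m:ℝ))^2 ≤ (m:ℝ)^(2*k) := pow_le_pow_right₀ hm1 (by omega)
                _ = (m:ℝ)^(2*k) := rfl
          nlinarith
        have hEabs : E = (2 : ℝ) ^ (2 * k - 1) * π ^ (2 * k) * |B| / ((2*k).factorial : ℝ) := by
          rw [← abs_of_nonneg hE0, hE, abs_div, abs_mul, abs_mul, abs_mul, abs_pow, abs_neg,
            abs_one, one_pow, one_mul, abs_pow, abs_pow, abs_of_pos (by norm_num : (0:ℝ) < 2),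
            abs_of_pos Real.pi_pos, Nat.abs_cast]
        have hfac : (0:ℝ) < ((2*k).factorial : ℝ) := by positivity
        rw [div_le_div_iff₀ hfac (by positivity)]
        have h2pow : (2*π) ^ (2*k) = 2 * ((2:ℝ)^(2*k-1) * π^(2*k)) := by
          rw [mul_pow]
          have : (2:ℝ)^(2*k) = 2 * 2^(2*k-1) := by
            rw [← pow_succ']
            congr 1
            omega
          rw [this]; ring
        have hkey : (2 : ℝ) ^ (2 * k - 1) * π ^ (2 * k) * |B| ≤ 2 * ((2*k).factorial : ℝ) := by
          rw [hEabs, div_le_iff₀ hfac] at hE2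
          linarith
        rw [h2pow]
        nlinarith [abs_nonneg B, pow_pos Real.pi_pos (2*k), pow_pos (by norm_num : (0:ℝ) < 2) (2*k-1)]
      · rw [bernoulli_eq_bernoulli'_of_ne_one (by omega), bernoulli'_eq_zero_of_odd ho (by omega)]
        simp only [Rat.cast_zero, abs_zero, zero_div]
        positivity

private lemma bern_summable {r : ℝ} (h0 : 0 ≤ r) (hr : r < 2 * π) :
    Summable (fun n : ℕ => |((bernoulli n : ℚ) : ℝ)| / n.factorial * r ^ n) := by
  have hπ : (0:ℝ) < 2 * π := by positivity
  have hgeo : Summable (fun n : ℕ => 4 * (r / (2*π)) ^ n) := by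
    have h1 : (0:ℝ) ≤ r / (2*π) := by positivity
    have h2 : r / (2*π) < 1 := by rwa [div_lt_one hπ]
    exact (summable_geometric_of_lt_one h1 h2).mul_left 4
  refine Summable.of_nonneg_of_le (fun n => by positivity) (fun n => ?_) hgeo
  have := mul_le_mul_of_nonneg_right (bern_abs_le n) (pow_nonneg h0 n)
  calc |((bernoulli n : ℚ) : ℝ)| / n.factorial * r ^ n ≤ 4 / (2*π)^n * r^n := this
    _ = 4 * (r/(2*π))^n := by rw [div_pow]; ring

set_option maxHeartbeats 1000000 in
/-- Bernoulli-series expansion of `1/(1-(1-z)^α)` for `0 < |z| < 1`, `|Log(1-z)| < 2π/α`. -/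
theorem bernoulli_series_expansion (α : ℝ) (hα : 0 < α) (z : ℂ)
    (hz0 : 0 < ‖z‖) (hz1 : ‖z‖ < 1)
    (hlog : ‖Complex.log (1-z)‖ < 2*Real.pi/α) :
    Complex.exp ((α:ℂ) * Complex.log (1-z)) ≠ 1 ∧
    Summable (fun j : ℕ =>
      ‖(((bernoulli (j+1) : ℚ) : ℂ)/((j+1).factorial : ℂ)) * (α:ℂ)^(j+1)
        * (Complex.log (1-z))^j‖) ∧
    (1 - Complex.exp ((α:ℂ) * Complex.log (1-z)))⁻¹
      = -((α:ℂ) * Complex.log (1-z))⁻¹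
        - (1/(α:ℂ)) * ∑' j : ℕ,
            (((bernoulli (j+1) : ℚ) : ℂ)/((j+1).factorial : ℂ)) * (α:ℂ)^(j+1)
              * (Complex.log (1-z))^j := by
  set L := Complex.log (1 - z) with hLdef
  have hz1' : (1:ℂ) - z ≠ 0 := by
    intro h
    have hz : z = 1 := by linear_combination -h
    rw [hz] at hz1; simp at hz1
  have hzne : z ≠ 0 := by
    intro h; rw [h] at hz0; simp at hz0
  have hL : L ≠ 0 := by
    intro h
    have he := Complex.exp_log hz1'
    rw [← hLdef, h, Complex.exp_zero] at he
    exact hzne (by linear_combination he)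
  have hαC : (α:ℂ) ≠ 0 := Complex.ofReal_ne_zero.mpr hα.ne'
  set w : ℂ := (α:ℂ) * L with hwdef
  have hw : w ≠ 0 := mul_ne_zero hαC hL
  have hwnorm : ‖w‖ < 2*Real.pi := by
    rw [hwdef, norm_mul, Complex.norm_real, Real.norm_eq_abs, abs_of_pos hα]
    calc α * ‖L‖ < α * (2*Real.pi/α) := by exact mul_lt_mul_of_pos_left hlog hα
      _ = 2*Real.pi := by field_simp
  set a : ℕ → ℂ := fun n => ((bernoulli n : ℚ):ℂ)/(n.factorial : ℂ) with hadef
  have hanorm : ∀ n, ‖a n‖ = |((bernoulli n : ℚ):ℝ)| / n.factorial := by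
    intro n
    rw [hadef]
    simp only [norm_div, Complex.norm_natCast, Complex.norm_ratCast]
  have hsa : Summable (fun n => ‖a n * w ^ n‖) := by
    have := bern_summable (norm_nonneg w) hwnorm
    refine this.congr (fun n => ?_)
    simp only [norm_mul, norm_pow, hanorm]
  have hFsum : HasSum (fun n => a n * w ^ n) (∑' n, a n * w ^ n) := hsa.of_norm.hasSum
  set F := ∑' n, a n * w ^ n with hFdef
  have hexp : HasSum (fun n : ℕ => w ^ n / (n.factorial : ℂ)) (Complex.exp w) := by
    rw [Complex.exp_eq_exp_ℂ]
    exact NormedSpace.expSeries_div_hasSum_exp w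
  set g : ℕ → ℂ := fun n => (if n = 0 then 0 else ((n.factorial : ℂ))⁻¹) * w ^ n with hgdef
  have hgfun : ∀ n : ℕ, g n = w ^ n / (n.factorial : ℂ) - (if n = 0 then 1 else 0) := by
    intro n
    rcases eq_or_ne n 0 with rfl | hn
    · simp [hgdef]
    · simp [hgdef, hn, div_eq_mul_inv, mul_comm]
  have hg : HasSum g (Complex.exp w - 1) := by
    have h2 : HasSum (fun n : ℕ => if n = 0 then (1:ℂ) else 0) 1 := hasSum_ite_eq 0 1
    have h3 := hexp.sub h2
    have h4 : (fun n : ℕ => w ^ n / (n.factorial : ℂ) - if n = 0 then 1 else 0) = g :=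
      funext fun n => (hgfun n).symm
    rwa [h4] at h3
  have hgsum : Summable (fun n => ‖g n‖) := by
    refine Summable.of_nonneg_of_le (fun _ => norm_nonneg _) (fun n => ?_)
      (Real.summable_pow_div_factorial ‖w‖)
    rcases eq_or_ne n 0 with rfl | hn
    · simp [hgdef]
    · rw [hgdef]
      simp only [hn, if_false, norm_mul, norm_inv, norm_pow, Complex.norm_natCast]
      rw [div_eq_mul_inv, mul_comm]
  have hcoeff : ∀ n : ℕ, (∑ kl ∈ Finset.HasAntidiagonal.antidiagonal n,
      a kl.1 * (if kl.2 = 0 then (0:ℂ) else ((kl.2.factorial : ℂ))⁻¹))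
      = if n = 1 then 1 else 0 := by
    intro n
    have h := bernoulliPowerSeries_mul_exp_sub_one ℂ
    have h2 := congrArg (PowerSeries.coeff n) h
    rw [PowerSeries.coeff_mul, PowerSeries.coeff_X] at h2
    rw [← h2]
    refine Finset.sum_congr rfl (fun p hp => ?_)
    congr 1
    · rw [hadef, bernoulliPowerSeries, PowerSeries.coeff_mk, eq_ratCast]
      push_cast
      ring
    · rw [map_sub, PowerSeries.coeff_exp, PowerSeries.coeff_one, eq_ratCast]
      rcases eq_or_ne p.2 0 with h0 | h0
      · simp [h0]
      · simp only [h0, if_false]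
        push_cast
        ring
  have hmul : F * (Complex.exp w - 1) = w := by
    rw [hFdef, ← hg.tsum_eq, tsum_mul_tsum_eq_tsum_sum_antidiagonal_of_summable_norm hsa hgsum]
    have key : ∀ n : ℕ, (∑ kl ∈ Finset.HasAntidiagonal.antidiagonal n, (a kl.1 * w ^ kl.1) * g kl.2)
        = (if n = 1 then (1:ℂ) else 0) * w ^ n := by
      intro n
      rw [← hcoeff n, Finset.sum_mul]
      refine Finset.sum_congr rfl (fun p hp => ?_)
      have hps : p.1 + p.2 = n := Finset.HasAntidiagonal.mem_antidiagonal.mp hp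
      rw [hgdef, ← hps, pow_add]
      ring
    rw [tsum_congr key, tsum_eq_single 1 (fun b hb => by simp [hb])]
    simp
  have hexp_ne : Complex.exp w ≠ 1 := by
    intro h
    rw [h] at hmul
    simp at hmul
    exact hw hmul.symm
  have hE : Complex.exp w - 1 ≠ 0 := sub_ne_zero.mpr hexp_ne
  have hshift : HasSum (fun j : ℕ => a (j+1) * w ^ (j+1)) (F - 1) := by
    have h0 : a 0 * w ^ 0 = 1 := by simp [hadef]
    refine (hasSum_nat_add_iff (f := fun n : ℕ => a n * w ^ n) 1).mpr ?_
    convert hFsum using 1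
    · rfl
    rw [Finset.range_one, Finset.sum_singleton, h0]
    ring
  have hG : HasSum (fun j : ℕ => a (j+1) * w ^ j) ((F - 1) * w⁻¹) := by
    have h5 := hshift.mul_right w⁻¹
    have heq : (fun i : ℕ => a (i+1) * w ^ (i+1) * w⁻¹) = fun j : ℕ => a (j+1) * w ^ j := by
      funext j
      rw [pow_succ]
      field_simp
    rwa [heq] at h5
  have hterm : ∀ j : ℕ, (((bernoulli (j+1) : ℚ) : ℂ)/((j+1).factorial : ℂ)) * (α:ℂ)^(j+1) * L^j
      = (α:ℂ) * (a (j+1) * w ^ j) := by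
    intro j
    rw [hadef, hwdef, mul_pow, pow_succ]
    ring
  refine ⟨hexp_ne, ?_, ?_⟩
  · have h1 : Summable (fun j : ℕ => ‖a (j+1) * w ^ (j+1)‖) :=
      (summable_nat_add_iff 1).mpr hsa
    refine ((h1.mul_left (‖(α:ℂ)‖ * ‖w‖⁻¹))).congr (fun j => ?_)
    rw [hterm j]
    simp only [norm_mul, norm_pow]
    have hwne : ‖w‖ ≠ 0 := norm_ne_zero_iff.mpr hw
    rw [pow_succ]
    have hwne' : ‖(α:ℂ) * L‖ ≠ 0 := hwne
    field_simp
  · have htsum : (∑' j : ℕ, (((bernoulli (j+1) : ℚ) : ℂ)/((j+1).factorial : ℂ)) * (α:ℂ)^(j+1) * L^j)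
        = (α:ℂ) * ((F - 1) * w⁻¹) := by
      rw [tsum_congr hterm, tsum_mul_left, hG.tsum_eq]
    rw [htsum]
    have hFval : F = w * (Complex.exp w - 1)⁻¹ := by
      rw [eq_mul_inv_iff_mul_eq₀ hE]
      exact hmul
    rw [hFval]
    have h1e : (1 : ℂ) - Complex.exp w ≠ 0 := by
      intro h
      exact hexp_ne (by linear_combination -h)
    field_simp
    ring
end

section
/- Let α > 0 and let z ∈ ℂ satisfy 0 < |z| < 1, |Log(1−z)| < 2π/α, and |Log(1−z)| < 2π, where Log is the principal complex logarithm. Then 1/(1 − exp(α·Log(1−z))) − 1/(α·z) = (1/α)·Σ_{j=0}^∞ ( B_{j+1}·(1 − α^{j+1}) / (j+1)! ) · (Log(1−z))^j, the series converging absolutely. -/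
open Real Finset

private lemma bern_bound (n : ℕ) :
    |((bernoulli n : ℚ) : ℝ)| * (2*π)^n ≤ 4 * n.factorial := by
  match n with
  | 0 => norm_num
  | 1 =>
      simp only [bernoulli_one, pow_one, Nat.factorial_one, Nat.cast_one, mul_one]
      push_cast
      rw [abs_of_nonpos (by norm_num : (-1/2 : ℝ) ≤ 0)]
      nlinarith [pi_le_four, pi_pos]
  | (m+2) =>
      rcases Nat.even_or_odd (m+2) with he | ho
      · obtain ⟨k, hk⟩ := he
        have hk2 : m + 2 = 2 * k := by omega
        rw [hk2]
        have hk0 : k ≠ 0 := by omega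
        have H := hasSum_zeta_nat hk0
        set b : ℝ := ((bernoulli (2*k) : ℚ) : ℝ) with hb
        set S : ℝ := (-1 : ℝ) ^ (k + 1) * 2 ^ (2 * k - 1) * π ^ (2 * k) * b / ((2*k).factorial:ℝ) with hS
        have hS0 : 0 ≤ S := H.nonneg (fun n => by positivity)
        have hSle : S ≤ π^2/6 := by
          refine hasSum_le (fun n => ?_) H hasSum_zeta_two
          rcases Nat.eq_zero_or_pos n with rfl | hn
          · rw [Nat.cast_zero, zero_pow (by omega : 2*k ≠ 0), zero_pow (two_ne_zero), div_zero]
          · have h1 : (1:ℝ) ≤ (n:ℝ) := by exact_mod_cast hn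
            have : (n:ℝ)^2 ≤ (n:ℝ)^(2*k) := pow_le_pow_right₀ h1 (by omega)
            exact one_div_le_one_div_of_le (by positivity) this
        have hS2 : S ≤ 2 := by nlinarith [pi_lt_d2, pi_pos]
        have hfac : (0:ℝ) < ((2*k).factorial : ℝ) := by positivity
        have h1 : S * ((2*k).factorial:ℝ) = (-1:ℝ)^(k+1) * 2^(2*k-1) * π^(2*k) * b := by
          rw [hS]; field_simp
        have h2 : S * ((2*k).factorial:ℝ) = 2^(2*k-1) * π^(2*k) * |b| := by
          have habs : |S * ((2*k).factorial : ℝ)| = S * ((2*k).factorial:ℝ) := abs_of_nonneg (by positivity)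
          rw [← habs, h1]
          simp [abs_mul, abs_pow, abs_of_pos pi_pos]
        have hp : (2:ℝ)^(2*k) = 2 * 2^(2*k-1) := by
          conv_lhs => rw [show 2*k = (2*k-1)+1 by omega]
          rw [pow_succ]; ring
        calc |b| * (2*π)^(2*k) = 2 * (2^(2*k-1) * π^(2*k) * |b|) := by
              rw [mul_pow, hp]; ring
          _ = 2 * (S * ((2*k).factorial:ℝ)) := by rw [h2]
          _ ≤ 4 * ((2*k).factorial:ℝ) := by nlinarith
      · have h0 : bernoulli (m+2) = 0 := by
          rw [bernoulli_eq_bernoulli'_of_ne_one (by omega)]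
          exact bernoulli'_eq_zero_of_odd ho (by omega)
        rw [h0]
        simp

private lemma bern_norm_summable {w : ℂ} (hw : ‖w‖ < 2*π) :
    Summable (fun n : ℕ => ‖((bernoulli n : ℚ) : ℂ) / (n.factorial : ℂ) * w^n‖) := by
  have h2π : (0:ℝ) < 2*π := by positivity
  have hgeom : Summable (fun n : ℕ => 4 * (‖w‖/(2*π))^n) :=
    (summable_geometric_of_lt_one (by positivity) (by rwa [div_lt_one h2π])).mul_left 4
  have hle : ∀ n : ℕ, ‖((bernoulli n : ℚ) : ℂ) / (n.factorial : ℂ) * w^n‖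
      ≤ 4 * (‖w‖/(2*π))^n := by
    intro n
    have hb := bern_bound n
    have hfac : (0:ℝ) < (n.factorial : ℝ) := by positivity
    have h1 : ‖((bernoulli n : ℚ) : ℂ)‖ = |((bernoulli n : ℚ) : ℝ)| := by
      rw [show ((bernoulli n : ℚ) : ℂ) = (((bernoulli n : ℚ) : ℝ) : ℂ) by norm_cast,
        Complex.norm_real, Real.norm_eq_abs]
    have h2 : ‖((n.factorial : ℕ) : ℂ)‖ = (n.factorial : ℝ) := by simp
    rw [norm_mul, norm_div, norm_pow, h1, h2]
    have hble : |((bernoulli n : ℚ) : ℝ)| ≤ 4 * n.factorial / (2*π)^n := by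
      rw [le_div_iff₀ (pow_pos h2π n)]; linarith
    calc |((bernoulli n : ℚ) : ℝ)| / n.factorial * ‖w‖^n
        ≤ (4 * n.factorial / (2*π)^n) / n.factorial * ‖w‖^n := by gcongr
      _ = 4 * (‖w‖/(2*π))^n := by
          rw [div_pow]; field_simp
  exact Summable.of_nonneg_of_le (fun n => norm_nonneg _) hle hgeom

private lemma bern_tsum_mul_exp {w : ℂ} (hw : ‖w‖ < 2*π) :
    (∑' n : ℕ, ((bernoulli n : ℚ) : ℂ) / (n.factorial : ℂ) * w^n) * Complex.exp w
      = (∑' n : ℕ, ((bernoulli n : ℚ) : ℂ) / (n.factorial : ℂ) * w^n) + w := by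
  have hf := bern_norm_summable hw
  have hg : Summable (fun n : ℕ => ‖w^n / (n.factorial : ℂ)‖) := by
    simp only [norm_div, norm_pow, Complex.norm_natCast]
    exact Real.summable_pow_div_factorial ‖w‖
  have hexp : Complex.exp w = ∑' n : ℕ, w^n / (n.factorial : ℂ) := by
    rw [Complex.exp_eq_exp_ℂ, NormedSpace.exp_eq_tsum_div]
  rw [hexp, tsum_mul_tsum_eq_tsum_sum_range_of_summable_norm hf hg]
  have key : ∀ n : ℕ,
      (∑ k ∈ range (n+1), (((bernoulli k : ℚ) : ℂ) / (k.factorial : ℂ) * w^k)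
        * (w^(n-k) / ((n-k).factorial : ℂ)))
      = ((bernoulli n : ℚ) : ℂ) / (n.factorial : ℂ) * w^n
        + (if n = 1 then 1 else 0) / (n.factorial : ℂ) * w^n := by
    intro n
    have hstep : ∀ k ∈ range (n+1),
        (((bernoulli k : ℚ) : ℂ) / (k.factorial : ℂ) * w^k) * (w^(n-k) / ((n-k).factorial : ℂ))
        = ((n.choose k : ℚ) * bernoulli k : ℚ) / (n.factorial : ℂ) * w^n := by
      intro k hk
      rw [mem_range] at hk
      have hkn : k ≤ n := by omega
      have hfac : (n.choose k : ℂ) * (k.factorial : ℂ) * ((n-k).factorial : ℂ)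
          = (n.factorial : ℂ) := by
        exact_mod_cast congrArg (Nat.cast : ℕ → ℂ)
          (Nat.choose_mul_factorial_mul_factorial hkn)
      have hpow : w^k * w^(n-k) = w^n := by
        rw [← pow_add]; congr 1; omega
      have hk0 : ((k.factorial : ℕ) : ℂ) ≠ 0 := by
        exact_mod_cast Nat.factorial_ne_zero k
      have hnk0 : (((n-k).factorial : ℕ) : ℂ) ≠ 0 := by
        exact_mod_cast Nat.factorial_ne_zero (n-k)
      have hn0 : ((n.factorial : ℕ) : ℂ) ≠ 0 := by
        exact_mod_cast Nat.factorial_ne_zero n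
      push_cast
      field_simp
      rw [← hpow]
      rw [← hfac]
      ring
    rw [sum_congr rfl hstep, ← sum_mul, ← sum_div, sum_range_succ]
    have hq : (∑ k ∈ range n, ((n.choose k : ℚ) * bernoulli k)) = if n = 1 then 1 else 0 :=
      sum_bernoulli n
    have : (∑ k ∈ range n, (((n.choose k : ℚ) * bernoulli k : ℚ) : ℂ))
        = ((if n = 1 then 1 else 0 : ℚ) : ℂ) := by
      rw [← Rat.cast_sum, hq]
    rw [this, Nat.choose_self]
    rcases eq_or_ne n 1 with h1 | h1
    · subst h1; norm_num [bernoulli_one]; ring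
    · simp only [h1, if_false]; push_cast; ring
  rw [tsum_congr key]
  rw [Summable.tsum_add hf.of_norm]
  · congr 1
    rw [tsum_eq_single 1]
    · norm_num
    · intro n hn
      simp [hn]
  · apply summable_of_ne_finset_zero (s := ({1} : Finset ℕ))
    intro n hn
    simp only [Finset.mem_singleton] at hn
    simp [hn]

private lemma inv_one_sub_exp {w : ℂ} (hw0 : w ≠ 0) (hw : ‖w‖ < 2*π) :
    (1 - Complex.exp w)⁻¹
      = -(∑' n : ℕ, ((bernoulli n : ℚ) : ℂ) / (n.factorial : ℂ) * w^n) / w := by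
  have hexp1 : Complex.exp w ≠ 1 := by
    intro h
    obtain ⟨m, hm⟩ := Complex.exp_eq_one_iff.mp h
    have hm0 : m ≠ 0 := by
      rintro rfl; simp at hm; exact hw0 hm
    have hge : (2*π) ≤ ‖w‖ := by
      rw [hm]
      rw [norm_mul]
      have h1 : ‖(m : ℂ)‖ = |(m : ℝ)| := by
        rw [show ((m : ℤ) : ℂ) = (((m : ℤ) : ℝ) : ℂ) by push_cast; ring, Complex.norm_real,
          Real.norm_eq_abs]
      have h2 : ‖(2 * (π : ℂ) * Complex.I)‖ = 2*π := by
        rw [norm_mul, norm_mul, Complex.norm_I, Complex.norm_ofNat, Complex.norm_real,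
          Real.norm_eq_abs, abs_of_pos pi_pos, mul_one]
      rw [h1, h2]
      have : (1:ℝ) ≤ |(m:ℝ)| := by
        rw [show |(m:ℝ)| = ((|m| : ℤ) : ℝ) by push_cast; ring]
        exact_mod_cast Int.one_le_abs hm0
      nlinarith [pi_pos]
    linarith
  have he : Complex.exp w - 1 ≠ 0 := sub_ne_zero.mpr hexp1
  have key := bern_tsum_mul_exp hw
  set F := ∑' n : ℕ, ((bernoulli n : ℚ) : ℂ) / (n.factorial : ℂ) * w^n with hF
  have hFe : F * (Complex.exp w - 1) = w := by
    rw [mul_sub, key]; ring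
  have hmul : (1 - Complex.exp w) * (-F/w) = 1 := by
    field_simp [hw0]
    linear_combination hFe
  exact inv_eq_of_mul_eq_one_right hmul

/-- Bernoulli-series expansion of the regular part `h_{0,α}^{reg}(z) = 1/(1-(1-z)^α) - 1/(αz)`. -/
theorem reg_part_series (α : ℝ) (hα : 0 < α) (z : ℂ)
    (hz0 : 0 < ‖z‖) (hz1 : ‖z‖ < 1)
    (hlog1 : ‖Complex.log (1-z)‖ < 2*Real.pi/α)
    (hlog2 : ‖Complex.log (1-z)‖ < 2*Real.pi) :
    Summable (fun j : ℕ =>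
      ‖(((bernoulli (j+1) : ℚ) : ℂ) * (1 - (α:ℂ)^(j+1)) / ((j+1).factorial : ℂ))
        * (Complex.log (1-z))^j‖) ∧
    (1 - Complex.exp ((α:ℂ) * Complex.log (1-z)))⁻¹ - 1/((α:ℂ)*z)
      = (1/(α:ℂ)) * ∑' j : ℕ,
          (((bernoulli (j+1) : ℚ) : ℂ) * (1 - (α:ℂ)^(j+1)) / ((j+1).factorial : ℂ))
            * (Complex.log (1-z))^j := by
  set w := Complex.log (1-z) with hwdef
  have h1z : (1:ℂ) - z ≠ 0 := by
    intro h
    have hz : z = 1 := by linear_combination -h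
    rw [hz] at hz1; simp at hz1
  have hexpw : Complex.exp w = 1 - z := Complex.exp_log h1z
  have hw0 : w ≠ 0 := by
    intro h
    rw [h, Complex.exp_zero] at hexpw
    have hz : z = 0 := by linear_combination hexpw
    rw [hz] at hz0; simp at hz0
  have hα0 : (α:ℂ) ≠ 0 := by exact_mod_cast hα.ne'
  have hαw : ‖(α:ℂ) * w‖ < 2*Real.pi := by
    rw [norm_mul, Complex.norm_real, Real.norm_eq_abs, abs_of_pos hα]
    rw [lt_div_iff₀ hα] at hlog1
    linarith
  have hαw0 : (α:ℂ) * w ≠ 0 := mul_ne_zero hα0 hw0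
  have hFw := inv_one_sub_exp hw0 hlog2
  have hFαw := inv_one_sub_exp hαw0 hαw
  have hsum_w := bern_norm_summable hlog2
  have hsum_αw := bern_norm_summable hαw
  set g : ℕ → ℂ := fun n =>
    ((bernoulli n : ℚ) : ℂ) / (n.factorial : ℂ) * (w^n - ((α:ℂ)*w)^n) with hgdef
  set T : ℕ → ℂ := fun j =>
    (((bernoulli (j+1) : ℚ) : ℂ) * (1 - (α:ℂ)^(j+1)) / ((j+1).factorial : ℂ)) * w^j
    with hTdef
  have hgT : ∀ j : ℕ, g (j+1) = T j * w := by
    intro j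
    simp only [hgdef, hTdef]
    rw [mul_pow]
    ring
  have hgnorm : Summable (fun n => ‖g n‖) := by
    refine Summable.of_nonneg_of_le (fun _ => norm_nonneg _) (fun n => ?_)
      (hsum_w.add hsum_αw)
    have : g n = ((bernoulli n : ℚ) : ℂ) / (n.factorial : ℂ) * w^n
        - ((bernoulli n : ℚ) : ℂ) / (n.factorial : ℂ) * ((α:ℂ)*w)^n := by
      simp only [hgdef]; ring
    rw [this]
    exact norm_sub_le _ _
  have hgsum : Summable g := hgnorm.of_norm
  have hgshift : Summable (fun j => ‖g (j+1)‖) := by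
    exact (summable_nat_add_iff 1).mpr hgnorm
  have hTsum : Summable (fun j => ‖T j‖) := by
    have : (fun j => ‖T j‖) = fun j => ‖g (j+1)‖ / ‖w‖ := by
      funext j
      conv_rhs => rw [hgT j, norm_mul,
        mul_div_cancel_right₀ _ (norm_ne_zero_iff.mpr hw0)]
    rw [this]
    exact hgshift.div_const _
  refine ⟨hTsum, ?_⟩
  -- tsum of g
  have hg0 : g 0 = 0 := by simp [hgdef]
  have htsum_g : ∑' n, g n = (∑' j, T j) * w := by
    rw [Summable.tsum_eq_zero_add hgsum, hg0, zero_add]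
    rw [tsum_congr hgT, tsum_mul_right]
  -- tsum g = F(w) - F(αw)
  have htsub : ∑' n, g n
      = (∑' n : ℕ, ((bernoulli n : ℚ) : ℂ) / (n.factorial : ℂ) * w^n)
        - (∑' n : ℕ, ((bernoulli n : ℚ) : ℂ) / (n.factorial : ℂ) * ((α:ℂ)*w)^n) := by
    rw [← Summable.tsum_sub hsum_w.of_norm hsum_αw.of_norm]
    refine tsum_congr (fun n => ?_)
    simp only [hgdef]; ring
  have hkey : (∑' n : ℕ, ((bernoulli n : ℚ) : ℂ) / (n.factorial : ℂ) * w^n)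
      - (∑' n : ℕ, ((bernoulli n : ℚ) : ℂ) / (n.factorial : ℂ) * ((α:ℂ)*w)^n)
      = (∑' j, T j) * w := by rw [← htsub, htsum_g]
  have hzne : z ≠ 0 := by
    intro h; rw [h] at hz0; simp at hz0
  have h1me : (1:ℂ) - Complex.exp w = z := by linear_combination -hexpw
  rw [h1me] at hFw
  rw [hFαw]
  set S := ∑' j, T j with hSdef
  set F := ∑' n : ℕ, ((bernoulli n : ℚ) : ℂ) / (n.factorial : ℂ) * w^n with hFdef
  set Fα := ∑' n : ℕ, ((bernoulli n : ℚ) : ℂ) / (n.factorial : ℂ) * ((α:ℂ)*w)^n with hFαdef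
  have hwz : w = -F * z := by
    rw [eq_div_iff hw0] at hFw
    calc w = z * (z⁻¹ * w) := by rw [← mul_assoc, mul_inv_cancel₀ hzne, one_mul]
      _ = z * (-F) := by rw [hFw]
      _ = -F * z := mul_comm _ _
  field_simp
  linear_combination z * hkey - hwz
end

section
/- Let α > 0 and z ∈ ℂ with |z| < 1. Then exp(α·Log(1−z)) = 1 if and only if |1−z| = 1 and Log(1−z) ∈ i·( (2π/α)·ℤ ∩ (−π/3, π/3) ). In particular, if 0 < α ≤ 6 then exp(α·Log(1−z)) = 1 holds for z in the open unit disc only for z = 0. -/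
open Complex Real

lemma arg_lt_of_re (w : ℂ) (hw : ‖w‖ = 1) (hre : 1/2 < w.re) :
    -(Real.pi/3) < w.arg ∧ w.arg < Real.pi/3 := by
  have hw0 : w ≠ 0 := by
    intro h; rw [h] at hw; simp at hw
  have hcos : Real.cos w.arg = w.re := by
    rw [Complex.cos_arg hw0, hw, div_one]
  have hpi := Real.pi_pos
  constructor
  · by_contra h
    push_neg at h
    have h1 : Real.cos w.arg ≤ 1/2 := by
      have := Real.cos_le_cos_of_nonneg_of_le_pi (by positivity : (0:ℝ) ≤ Real.pi/3)
        (by linarith [Complex.neg_pi_lt_arg w] : -w.arg ≤ Real.pi) (by linarith)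
      rw [Real.cos_neg] at this
      calc Real.cos w.arg ≤ Real.cos (Real.pi/3) := this
        _ = 1/2 := by rw [Real.cos_pi_div_three]
    linarith
  · by_contra h
    push_neg at h
    have h1 : Real.cos w.arg ≤ 1/2 := by
      have := Real.cos_le_cos_of_nonneg_of_le_pi (by positivity : (0:ℝ) ≤ Real.pi/3)
        (Complex.arg_le_pi w) h
      calc Real.cos w.arg ≤ Real.cos (Real.pi/3) := this
        _ = 1/2 := by rw [Real.cos_pi_div_three]
    linarith

/-- Characterization of the poles of `h_{0,α}(z) = 1/(1-(1-z)^α)` in the open unit disc: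
`(1-z)^α = 1` iff `|1-z| = 1` and `Log(1-z) ∈ i·((2π/α)ℤ ∩ (-π/3, π/3))`.
For `0 < α ≤ 6` this happens only at `z = 0`. -/
theorem pole_characterization (α : ℝ) (hα : 0 < α) (z : ℂ) (hz : ‖z‖ < 1) :
    (Complex.exp ((α:ℂ) * Complex.log (1-z)) = 1 ↔
      (‖1-z‖ = 1 ∧ ∃ m : ℤ,
        Complex.log (1-z) = Complex.I * ((((2*Real.pi/α) * (m:ℝ)) : ℝ) : ℂ)
        ∧ -(Real.pi/3) < (2*Real.pi/α) * (m:ℝ) ∧ (2*Real.pi/α) * (m:ℝ) < Real.pi/3)) ∧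
    (α ≤ 6 → Complex.exp ((α:ℂ) * Complex.log (1-z)) = 1 → z = 0) := by
  have hα0 : (α:ℂ) ≠ 0 := by exact_mod_cast hα.ne'
  have hw0 : (1:ℂ) - z ≠ 0 := by
    intro h
    have : z = 1 := by linear_combination -h
    rw [this] at hz; simp at hz
  have hpi := Real.pi_pos
  have main : Complex.exp ((α:ℂ) * Complex.log (1-z)) = 1 ↔
      (‖1-z‖ = 1 ∧ ∃ m : ℤ,
        Complex.log (1-z) = Complex.I * ((((2*Real.pi/α) * (m:ℝ)) : ℝ) : ℂ)
        ∧ -(Real.pi/3) < (2*Real.pi/α) * (m:ℝ) ∧ (2*Real.pi/α) * (m:ℝ) < Real.pi/3) := by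
    constructor
    · intro h
      rw [Complex.exp_eq_one_iff] at h
      obtain ⟨n, hn⟩ := h
      have hlog : Complex.log (1-z) = Complex.I * ((((2*Real.pi/α) * (n:ℝ)) : ℝ) : ℂ) := by
        push_cast
        rw [div_mul_eq_mul_div, mul_div_assoc']
        rw [eq_div_iff hα0, mul_comm (Complex.log (1-z))]
        linear_combination hn
      -- real part gives |1-z| = 1
      have hre : (Complex.log (1-z)).re = 0 := by
        rw [hlog]; simp [Complex.mul_re]
      rw [Complex.log_re] at hre
      have habs : ‖1-z‖ = 1 := by
        rcases Real.log_eq_zero.mp hre with h1 | h1 | h1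
        · exact absurd h1 (norm_ne_zero_iff.mpr hw0)
        · exact h1
        · have := norm_nonneg (1-z); linarith
      have hnorm : ‖(1:ℂ)-z‖ = 1 := habs
      refine ⟨hnorm, n, hlog, ?_⟩
      -- imaginary part is arg
      have him : (Complex.log (1-z)).im = (2*Real.pi/α) * (n:ℝ) := by
        rw [hlog]; simp [Complex.mul_im]
      rw [Complex.log_im] at him
      have hre2 : 1/2 < ((1:ℂ)-z).re := by
        have h2 : ‖z‖ ^ 2 < 1 := by
          have : ‖z‖ < 1 := hz
          nlinarith [norm_nonneg z]
        rw [← Complex.normSq_eq_norm_sq] at h2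
        have h3 : Complex.normSq (1-z) = 1 := by
          rw [← Complex.sq_norm, habs]; norm_num
        simp [Complex.normSq_apply, Complex.sub_re, Complex.sub_im] at h2 h3
        rw [Complex.sub_re, Complex.one_re]
        nlinarith
      have := arg_lt_of_re (1-z) habs hre2
      rw [him] at this
      exact this
    · rintro ⟨-, m, hlog, -, -⟩
      rw [Complex.exp_eq_one_iff]
      refine ⟨m, ?_⟩
      rw [hlog]
      push_cast
      field_simp
  refine ⟨main, fun hα6 h => ?_⟩
  obtain ⟨habs, m, hlog, hlb, hub⟩ := main.mp h
  have hm : m = 0 := by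
    by_contra hm0
    have h1 : Real.pi/3 ≤ 2*Real.pi/α := by
      rw [div_le_div_iff₀ (by norm_num) hα]
      nlinarith
    have h2 : (0:ℝ) < 2*Real.pi/α := by positivity
    rcases lt_or_gt_of_ne hm0 with hneg | hpos
    · have : (m:ℝ) ≤ -1 := by exact_mod_cast (show m ≤ -1 by omega)
      nlinarith
    · have : (1:ℝ) ≤ (m:ℝ) := by exact_mod_cast (show (1:ℤ) ≤ m by omega)
      nlinarith
  rw [hm] at hlog
  simp at hlog
  have : (1:ℂ) - z = 1 := by
    have := Complex.exp_log hw0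
    rw [hlog, Complex.exp_zero] at this
    exact this.symm
  linear_combination -this
end

section
/- Let m ≥ 1 be a natural number and let f : ℝ → ℝ be C^∞ with f(0) = 0 and f'(0) ≠ 0. Define g : ℝ → ℝ by g(r) := r^{2m+2}·(f''(r))² / f(r) (with the convention that division by zero yields zero, so in particular g(0) = 0). Then g is (2m+1)-times differentiable at 0 and its (2m+1)-st derivative at 0 equals (2m+1)! · (f''(0))² / f'(0). -/
open Set Filter MeasureTheory intervalIntegral

/-- Iterated derivatives respect local equality. -/
lemma iterEventuallyEq {f g : ℝ → ℝ} {x : ℝ} (h : f =ᶠ[nhds x] g) (n : ℕ) :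
    deriv^[n] f =ᶠ[nhds x] deriv^[n] g := by
  induction n with
  | zero => exact h
  | succ n ih =>
    rw [Function.iterate_succ_apply', Function.iterate_succ_apply']
    exact ih.deriv

/-- The `n`-th derivative of `x^n ψ(x)` at `0` is `n! ψ(0)`, for `ψ` smooth near `0`. -/
lemma lemA : ∀ (n : ℕ) (ψ : ℝ → ℝ) (U : Set ℝ), IsOpen U → 0 ∈ U →
    ContDiffOn ℝ ((⊤ : ℕ∞) : WithTop ℕ∞) ψ U →
    (∀ i < n, DifferentiableAt ℝ (deriv^[i] (fun x : ℝ => x ^ n * ψ x)) 0) ∧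
      deriv^[n] (fun x : ℝ => x ^ n * ψ x) 0 = (n.factorial : ℝ) * ψ 0 := by
  intro n
  induction n with
  | zero =>
    intro ψ U hU h0 hψ
    exact ⟨fun i hi => absurd hi (Nat.not_lt_zero i), by simp⟩
  | succ n ih =>
    intro ψ U hU h0 hψ
    have hψd : ∀ x ∈ U, DifferentiableAt ℝ ψ x := fun x hx =>
      (hψ.differentiableOn (by simp)).differentiableAt (hU.mem_nhds hx)
    set ψ₁ : ℝ → ℝ := fun x => (n + 1 : ℝ) * ψ x + x * deriv ψ x with hψ₁def
    have hψ₁ : ContDiffOn ℝ ((⊤ : ℕ∞) : WithTop ℕ∞) ψ₁ U := by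
      have hd : ContDiffOn ℝ ((⊤ : ℕ∞) : WithTop ℕ∞) (deriv ψ) U :=
        hψ.deriv_of_isOpen hU (by norm_num)
      exact (contDiffOn_const.mul hψ).add (contDiffOn_id.mul hd)
    have hderiv : ∀ x ∈ U, deriv (fun x : ℝ => x ^ (n + 1) * ψ x) x = x ^ n * ψ₁ x := by
      intro x hx
      have h1 : HasDerivAt (fun x : ℝ => x ^ (n + 1)) ((n + 1 : ℝ) * x ^ n) x := by
        simpa using hasDerivAt_pow (n + 1) x
      have h2 := (hψd x hx).hasDerivAt
      rw [show (fun x : ℝ => x ^ (n + 1) * ψ x) = (fun x : ℝ => x ^ (n + 1)) * ψ from rfl,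
        (h1.mul h2).deriv, h2.deriv]
      simp only [hψ₁def]
      ring
    have hEq : deriv (fun x : ℝ => x ^ (n + 1) * ψ x) =ᶠ[nhds (0 : ℝ)]
        (fun x : ℝ => x ^ n * ψ₁ x) := by
      filter_upwards [hU.mem_nhds h0] with x hx using hderiv x hx
    obtain ⟨IH1, IH2⟩ := ih ψ₁ U hU h0 hψ₁
    constructor
    · intro i hi
      match i with
      | 0 =>
        exact (differentiableAt_pow (n + 1)).mul (hψd 0 h0)
      | (j + 1) =>
        rw [Function.iterate_succ_apply]
        exact ((iterEventuallyEq hEq j).differentiableAt_iff).mpr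
          (IH1 j (by omega))
    · rw [Function.iterate_succ_apply, (iterEventuallyEq hEq n).eq_of_nhds, IH2]
      simp only [hψ₁def]
      have hd0 : deriv ψ 0 * (0 : ℝ) = 0 := by ring
      rw [Nat.factorial_succ]
      push_cast
      ring

/-- Hadamard's lemma: a smooth function vanishing at `0` is `x · h x` with `h` smooth. -/
lemma hadamard {f : ℝ → ℝ} (hf : ContDiff ℝ ((⊤ : ℕ∞) : WithTop ℕ∞) f) (hf0 : f 0 = 0) :
    ∃ h : ℝ → ℝ, ContDiff ℝ ((⊤ : ℕ∞) : WithTop ℕ∞) h ∧ h 0 = deriv f 0 ∧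
      ∀ x, f x = x * h x := by
  set H : ℕ → ℝ → ℝ := fun k x => ∫ t in (0:ℝ)..1, t ^ k * deriv^[k + 1] f (t * x) with hH
  have hDcont : ∀ k : ℕ, Continuous (deriv^[k] f) := fun k =>
    (hf.iterate_deriv k).continuous
  have key : ∀ (k : ℕ) (x₀ : ℝ), HasDerivAt (H k) (H (k + 1) x₀) x₀ := by
    intro k x₀
    set D := deriv^[k + 1] f with hD
    set D' := deriv^[k + 2] f with hD'
    have hDD' : ∀ y : ℝ, HasDerivAt D (D' y) y := by
      intro y
      have hdiff : DifferentiableAt ℝ D y :=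
        ((hf.iterate_deriv (k + 1)).differentiable (by simp)) y
      have : deriv D = D' := by
        rw [hD, hD', ← Function.iterate_succ_apply' deriv (k + 1) f]
      rw [← this]
      exact hdiff.hasDerivAt
    obtain ⟨C, hC⟩ := (isCompact_Icc (a := -(|x₀| + 1)) (b := |x₀| + 1)).exists_bound_of_continuousOn
      ((hDcont (k + 2)).continuousOn)
    have hball : ∀ t ∈ Set.Ioc (0:ℝ) 1, ∀ x ∈ Metric.ball x₀ 1,
        t * x ∈ Set.Icc (-(|x₀| + 1)) (|x₀| + 1) := by
      intro t ht x hx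
      have hxb : |x| ≤ |x₀| + 1 := by
        have := mem_ball_iff_norm.mp hx
        have : |x - x₀| < 1 := this
        have h1 : |x| ≤ |x - x₀| + |x₀| := by
          calc |x| = |(x - x₀) + x₀| := by ring_nf
          _ ≤ |x - x₀| + |x₀| := abs_add_le _ _
        linarith
      have : |t * x| ≤ |x| := by
        rw [abs_mul]
        have ht0 : 0 ≤ t := le_of_lt ht.1
        have : |t| ≤ 1 := by rw [abs_of_nonneg ht0]; exact ht.2
        nlinarith [abs_nonneg x]
      rw [Set.mem_Icc]
      constructor <;> [nlinarith [abs_nonneg (t*x), neg_abs_le (t*x)]; nlinarith [le_abs_self (t*x)]]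
    have main := intervalIntegral.hasDerivAt_integral_of_dominated_loc_of_deriv_le
      (F := fun x t => t ^ k * D (t * x)) (F' := fun x t => t ^ (k + 1) * D' (t * x))
      (x₀ := x₀) (a := 0) (b := 1) (μ := volume) (bound := fun _ => |C|) (s := Metric.ball x₀ 1)
      (Metric.ball_mem_nhds x₀ one_pos)
      (Filter.Eventually.of_forall fun x =>
        (((continuous_pow k).mul ((hDcont (k + 1)).comp
          ((continuous_id).mul continuous_const))).aestronglyMeasurable).restrict)
      (((continuous_pow k).mul ((hDcont (k + 1)).comp
          ((continuous_id).mul continuous_const))).intervalIntegrable 0 1)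
      (((continuous_pow (k + 1)).mul ((hDcont (k + 2)).comp
          ((continuous_id).mul continuous_const))).aestronglyMeasurable).restrict
      ?_ intervalIntegrable_const ?_
    · exact main.2
    · refine Filter.Eventually.of_forall fun t ht x hx => ?_
      rw [Set.uIoc_of_le (by norm_num : (0:ℝ) ≤ 1)] at ht
      have hmem := hball t ht x hx
      have hb := hC (t * x) hmem
      have ht1 : |t ^ (k + 1)| ≤ 1 := by
        rw [abs_pow]
        exact pow_le_one₀ (abs_nonneg t) (by rw [abs_of_nonneg (le_of_lt ht.1)]; exact ht.2)
      calc ‖t ^ (k + 1) * D' (t * x)‖ = |t ^ (k + 1)| * ‖D' (t * x)‖ := by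
            simp [abs_mul, Real.norm_eq_abs]
        _ ≤ 1 * |C| := by
            apply mul_le_mul ht1 (le_trans hb (le_abs_self C)) (norm_nonneg _) zero_le_one
        _ = |C| := one_mul _
    · refine Filter.Eventually.of_forall fun t ht x hx => ?_
      have inner : HasDerivAt (fun x : ℝ => t * x) t x := by
        simpa using (hasDerivAt_id x).const_mul t
      have := ((hDD' (t * x)).comp x inner).const_mul (t ^ k)
      rw [show t ^ (k + 1) * D' (t * x) = t ^ k * (D' (t * x) * t) by ring]
      exact this
  have hsmooth : ∀ (n : ℕ) (k : ℕ), ContDiff ℝ (n : WithTop ℕ∞) (H k) := by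
    intro n
    induction n with
    | zero =>
      intro k
      rw [show ((0 : ℕ) : WithTop ℕ∞) = 0 by norm_cast]
      rw [contDiff_zero]
      have : Differentiable ℝ (H k) := fun x => (key k x).differentiableAt
      exact this.continuous
    | succ n ih =>
      intro k
      have hd : deriv (H k) = H (k + 1) := funext fun x => (key k x).deriv
      rw [show ((n + 1 : ℕ) : WithTop ℕ∞) = (n : WithTop ℕ∞) + 1 by push_cast; ring]
      rw [contDiff_succ_iff_deriv]
      refine ⟨fun x => (key k x).differentiableAt, by simp, ?_⟩
      rw [hd]; exact ih (k + 1)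
  have hH0smooth : ContDiff ℝ ((⊤ : ℕ∞) : WithTop ℕ∞) (H 0) :=
    contDiff_infty.mpr fun n => hsmooth n 0
  refine ⟨H 0, hH0smooth, ?_, ?_⟩
  · simp [hH]
  · intro x
    rcases eq_or_ne x 0 with rfl | hx
    · simp [hf0]
    · have h1 : H 0 x = ∫ t in (0:ℝ)..1, deriv f (t * x) := by
        simp [hH]
      have h2 : (∫ t in (0:ℝ)..1, deriv f (t * x)) = x⁻¹ • ∫ u in (0*x)..(1*x), deriv f u :=
        intervalIntegral.integral_comp_mul_right (deriv f) hx
      have h3 : (∫ u in (0:ℝ)..x, deriv f u) = f x - f 0 := by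
        apply intervalIntegral.integral_deriv_eq_sub
        · exact fun y _ => (hf.differentiable (by simp)) y
        · have : Continuous (deriv f) := by
            have := hDcont 1
            simpa using this
          exact this.intervalIntegrable 0 x
      rw [h1, h2]
      simp only [zero_mul, one_mul] at *
      rw [h3, hf0, sub_zero, smul_eq_mul]
      field_simp

/-- The `(2m+1)`-st derivative at `0` of `g(r) = r^{2m+2}·f''(r)²/f(r)` equals
`(2m+1)!·f''(0)²/f'(0)` (with the convention that division by zero yields zero). -/
theorem iterated_deriv_g (m : ℕ) (hm : 1 ≤ m) (f : ℝ → ℝ) (hf : ContDiff ℝ (⊤ : ℕ∞) f)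
    (hf0 : f 0 = 0) (hf'0 : deriv f 0 ≠ 0) :
    (∀ i < 2*m+1,
      DifferentiableAt ℝ
        (deriv^[i] (fun r : ℝ => r^(2*m+2) * (deriv (deriv f) r)^2 / f r)) 0) ∧
    deriv^[2*m+1] (fun r : ℝ => r^(2*m+2) * (deriv (deriv f) r)^2 / f r) 0
      = ((2*m+1).factorial : ℝ) * (deriv (deriv f) 0)^2 / deriv f 0 := by
  have hf' : ContDiff ℝ ((⊤ : ℕ∞) : WithTop ℕ∞) f := hf.of_le (by simp)
  obtain ⟨h, hhsm, hh0, hfh⟩ := hadamard hf' hf0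
  set U : Set ℝ := {x | h x ≠ 0} with hUdef
  have hUopen : IsOpen U := isOpen_ne.preimage hhsm.continuous
  have hU0 : (0 : ℝ) ∈ U := by simpa [hUdef] using hh0 ▸ hf'0
  set ψ : ℝ → ℝ := fun x => (deriv (deriv f) x) ^ 2 / h x with hψdef
  have hψ : ContDiffOn ℝ ((⊤ : ℕ∞) : WithTop ℕ∞) ψ U := by
    have hnum : ContDiff ℝ ((⊤ : ℕ∞) : WithTop ℕ∞) (fun x => (deriv (deriv f) x) ^ 2) := by
      have := hf'.iterate_deriv 2
      exact (by simpa using this : ContDiff ℝ ((⊤ : ℕ∞) : WithTop ℕ∞) (deriv (deriv f))).pow 2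
    exact hnum.contDiffOn.div hhsm.contDiffOn (fun x hx => hx)
  have geq : (fun r : ℝ => r^(2*m+2) * (deriv (deriv f) r)^2 / f r) =ᶠ[nhds (0:ℝ)]
      (fun r : ℝ => r ^ (2*m+1) * ψ r) := by
    filter_upwards [hUopen.mem_nhds hU0] with r hr
    rcases eq_or_ne r 0 with rfl | hr0
    · simp [hf0, hψdef, zero_pow (by omega : 2*m+2 ≠ 0), zero_pow (by omega : 2*m+1 ≠ 0)]
    · have hhr : h r ≠ 0 := hr
      have hfr : f r = r * h r := hfh r
      rw [hψdef, hfr]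
      have : r ^ (2*m+2) = r ^ (2*m+1) * r := by rw [← pow_succ]
      rw [this]
      field_simp
  obtain ⟨hdiff, hval⟩ := lemA (2*m+1) ψ U hUopen hU0 hψ
  constructor
  · intro i hi
    exact ((iterEventuallyEq geq i).differentiableAt_iff).mpr (hdiff i hi)
  · rw [(iterEventuallyEq geq (2*m+1)).eq_of_nhds, hval, hψdef]
    simp only [hh0]
    rw [mul_div_assoc]
end

section
/- Let α > 0. The functions ĥ_{0,α}, ĥ_{2,α} : (0,1) → ℝ defined by ĥ_{0,α}(t) := (1/t)·( 1/(1−(1−t)^α) − 1/(α·t) + (1−α)/(2α) ) and ĥ_{2,α}(t) := (1/t)·( Σ_{n=1}^∞ α² n² (1−t)^{nα} − (1−t)(2−t)/(α·t³) ) extend to continuous functions on the closed interval [0,1]. In particular, the integral ∫₀¹ ( ĥ_{2,α}(t) − (1/4)·ĥ_{0,α}(t) )·(1−t)^{−1/2} dt is finite. -/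
open scoped Nat
open Real Set

/-! Auxiliary power series machinery.  We write the regularized functions
`ĥ_{0,α}` and `ĥ_{2,α}` in terms of entire functions given by explicit
power series with factorially decaying coefficients. -/

noncomputable def psum (a : ℕ → ℝ) (x : ℝ) : ℝ := ∑' k, a k * x ^ k

noncomputable def Ecoef (k : ℕ) : ℝ := 1 / ((k+1)! : ℝ)
noncomputable def A1coef (k : ℕ) : ℝ := ((k:ℝ)+1) / ((k+3)! : ℝ)
noncomputable def A2coef (k : ℕ) : ℝ :=
  ((2:ℝ)^(k+4)+1)/((k+4)! : ℝ) + (6*(2:ℝ)^(k+7) - 2*3^(k+7) - 6)/((k+7)! : ℝ)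

lemma hasSum_exp' (x : ℝ) : HasSum (fun n : ℕ => x ^ n / n !) (Real.exp x) := by
  rw [Real.exp_eq_exp_ℝ]; exact NormedSpace.expSeries_div_hasSum_exp x

lemma psum_continuous (a : ℕ → ℝ) (C : ℝ) (h : ∀ k, |a k| ≤ C * 3 ^ k / k !) :
    Continuous (psum a) := by
  rw [continuous_iff_continuousAt]
  intro x₀
  set R : ℝ := |x₀| + 1 with hR
  have hR0 : 0 < R := by positivity
  have hsum : Summable (fun k : ℕ => C * ((3*R) ^ k / k !)) :=
    (Real.summable_pow_div_factorial (3*R)).mul_left C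
  have hcont : ContinuousOn (psum a) (Set.Ioo (-R) R) := by
    apply continuousOn_tsum (u := fun k => C * ((3*R)^k / k !))
    · intro i; exact (continuous_const.mul (continuous_pow i)).continuousOn
    · exact hsum
    · intro n x hx
      have hxR : |x| ≤ R := by
        rcases hx with ⟨h1, h2⟩; rw [abs_le]; constructor <;> linarith
      have h1 : ‖a n * x ^ n‖ = |a n| * |x| ^ n := by
        rw [norm_mul, norm_pow, Real.norm_eq_abs, Real.norm_eq_abs]
      rw [h1]
      have h2 : |a n| * |x| ^ n ≤ (C * 3^n / n !) * R ^ n := by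
        apply mul_le_mul (h n) (pow_le_pow_left₀ (abs_nonneg x) hxR n)
          (by positivity) ((abs_nonneg (a n)).trans (h n))
      calc |a n| * |x| ^ n ≤ (C * 3^n / n !) * R ^ n := h2
        _ = C * ((3*R)^n / n !) := by rw [mul_pow]; ring
  exact hcont.continuousAt
    (Ioo_mem_nhds (by linarith [neg_abs_le x₀]) (by linarith [le_abs_self x₀]))

lemma hasSum_E' (x : ℝ) : HasSum (fun n : ℕ => x ^ (n+1) / (n+1)!) (Real.exp x - 1) := by
  have h := (hasSum_nat_add_iff' (f := fun n : ℕ => x ^ n / n !) 1).2 (hasSum_exp' x)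
  simpa using h

lemma hasSum_mexp (x : ℝ) : HasSum (fun m : ℕ => (m : ℝ)/ m ! * x ^ m) (x * Real.exp x) := by
  have h2 : HasSum (fun n : ℕ => ((n:ℝ)+1)/ (n+1)! * x ^ (n+1)) (x * Real.exp x) := by
    have h := (hasSum_exp' x).mul_left x
    convert h using 2 with n
    · rfl
    have hn : ((n:ℝ)+1) ≠ 0 := by positivity
    have hf : ((n !:ℝ)) ≠ 0 := by exact_mod_cast Nat.factorial_ne_zero n
    rw [Nat.factorial_succ]
    push_cast
    field_simp
    ring
  have h3 := (hasSum_nat_add_iff (f := fun m : ℕ => (m : ℝ)/ m ! * x ^ m) 1).1 (by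
    convert h2 using 2 with n
    · rfl
    push_cast; ring_nf)
  simpa using h3

lemma hasSum_A1' (x : ℝ) :
    HasSum (fun k : ℕ => ((k:ℝ)+1)/ (k+3)! * x ^ (k+3))
      (x + 2 - 2*Real.exp x + x*Real.exp x) := by
  have hb : HasSum (fun m : ℕ => ((m:ℝ)-2)/ m ! * x ^ m) (x*Real.exp x - 2*Real.exp x) := by
    have h := (hasSum_mexp x).sub ((hasSum_exp' x).mul_left 2)
    convert h using 2 with m
    · rfl
    have hf : ((m !:ℝ)) ≠ 0 := by exact_mod_cast Nat.factorial_ne_zero m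
    field_simp
  have h3 := (hasSum_nat_add_iff' (f := fun m : ℕ => ((m:ℝ)-2)/ m ! * x ^ m) 3).2 hb
  have hsum3 : (∑ i ∈ Finset.range 3, ((i:ℝ)-2)/ i ! * x ^ i) = -2 - x := by
    simp [Finset.sum_range_succ, Nat.factorial]
    ring
  rw [hsum3, show x*Real.exp x - 2*Real.exp x - (-2 - x)
      = x + 2 - 2*Real.exp x + x*Real.exp x from by ring] at h3
  convert h3 using 2 with k
  · rfl
  push_cast
  ring_nf

lemma hasSum_A2' (x : ℝ) :
    HasSum (fun k : ℕ => ((2^(k+4)+1)/ (k+4)! + (6*2^(k+7) - 2*3^(k+7) - 6)/ (k+7)!) * x ^ (k+7))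
      (x^3*((Real.exp x)^2 + Real.exp x) - 2*(Real.exp x - 1)^3) := by
  have e2 : Real.exp (2*x) = (Real.exp x)^2 := by
    rw [two_mul, Real.exp_add]; ring
  have e3 : Real.exp (3*x) = (Real.exp x)^3 := by
    rw [show (3:ℝ)*x = x + (x + x) by ring, Real.exp_add, Real.exp_add]; ring
  have hP : HasSum (fun m : ℕ => ((2:ℝ)^m+1)/ m ! * x ^ (m+3))
      (x^3 * ((Real.exp x)^2 + Real.exp x)) := by
    have h := ((hasSum_exp' (2*x)).add (hasSum_exp' x)).mul_left (x^3)
    rw [e2] at h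
    convert h using 2 with m
    · rfl
    rw [mul_pow]
    have hf : ((m !:ℝ)) ≠ 0 := by exact_mod_cast Nat.factorial_ne_zero m
    field_simp
    ring
  have hQ : HasSum (fun m : ℕ => (6*(2:ℝ)^m - 2*3^m - 6)/ m ! * x ^ m)
      (6*(Real.exp x)^2 - 2*(Real.exp x)^3 - 6*Real.exp x) := by
    have h := (((hasSum_exp' (2*x)).mul_left 6).sub ((hasSum_exp' (3*x)).mul_left 2)).sub
      ((hasSum_exp' x).mul_left 6)
    rw [e2, e3] at h
    convert h using 2 with m
    · rfl
    rw [mul_pow, mul_pow]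
    have hf : ((m !:ℝ)) ≠ 0 := by exact_mod_cast Nat.factorial_ne_zero m
    field_simp
  have hP4 := (hasSum_nat_add_iff' (f := fun m : ℕ => ((2:ℝ)^m+1)/ m ! * x ^ (m+3)) 4).2 hP
  have hQ7 := (hasSum_nat_add_iff'
    (f := fun m : ℕ => (6*(2:ℝ)^m - 2*3^m - 6)/ m ! * x ^ m) 7).2 hQ
  have h := hP4.add hQ7
  have hval : x ^ 3 * ((Real.exp x)^2 + Real.exp x)
        - ∑ i ∈ Finset.range 4, ((2:ℝ)^i+1)/ i ! * x ^ (i+3)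
      + (6*(Real.exp x)^2 - 2*(Real.exp x)^3 - 6*Real.exp x
        - ∑ i ∈ Finset.range 7, (6*(2:ℝ)^i - 2*3^i - 6)/ i ! * x ^ i)
      = x^3*((Real.exp x)^2 + Real.exp x) - 2*(Real.exp x - 1)^3 := by
    simp [Finset.sum_range_succ, Nat.factorial]
    ring
  rw [hval] at h
  convert h using 2 with k
  · rfl
  ring

lemma E_eq {x : ℝ} (hx : x ≠ 0) : psum Ecoef x = (Real.exp x - 1)/x := by
  have h := (hasSum_E' x).div_const x
  have h2 : HasSum (fun n : ℕ => Ecoef n * x ^ n) ((Real.exp x - 1)/x) := by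
    convert h using 2 with n
    · rfl
    rw [Ecoef, pow_succ]
    field_simp
  exact h2.tsum_eq

lemma A1_eq {x : ℝ} (hx : x ≠ 0) :
    psum A1coef x = (x + 2 - 2*Real.exp x + x*Real.exp x) / x^3 := by
  have h := (hasSum_A1' x).div_const (x^3)
  have h2 : HasSum (fun k : ℕ => A1coef k * x ^ k)
      ((x + 2 - 2*Real.exp x + x*Real.exp x) / x^3) := by
    convert h using 2 with k
    · rfl
    rw [A1coef, pow_add]
    field_simp
  exact h2.tsum_eq

lemma A2_eq {x : ℝ} (hx : x ≠ 0) :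
    psum A2coef x = (x^3*((Real.exp x)^2 + Real.exp x) - 2*(Real.exp x - 1)^3) / x^7 := by
  have h := (hasSum_A2' x).div_const (x^7)
  have h2 : HasSum (fun k : ℕ => A2coef k * x ^ k)
      ((x^3*((Real.exp x)^2 + Real.exp x) - 2*(Real.exp x - 1)^3) / x^7) := by
    convert h using 2 with k
    · rfl
    rw [A2coef, pow_add]
    field_simp
    ring
  exact h2.tsum_eq

lemma Epos (x : ℝ) : 0 < psum Ecoef x := by
  rcases eq_or_ne x 0 with h | h
  · subst h
    have : psum Ecoef 0 = Ecoef 0 := by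
      rw [psum]
      rw [tsum_eq_single 0 (fun k hk => by simp [zero_pow hk])]
      simp
    rw [this, Ecoef]
    norm_num
  · rw [E_eq h]
    rcases h.lt_or_gt with hx | hx
    · apply div_pos_of_neg_of_neg _ hx
      rw [sub_neg]
      exact Real.exp_lt_one_iff.2 hx
    · apply div_pos _ hx
      rw [sub_pos]
      exact Real.one_lt_exp_iff.2 hx

lemma fact_le_fact_cast {k j : ℕ} (h : k ≤ j) : ((k ! : ℕ) : ℝ) ≤ ((j ! : ℕ) : ℝ) := by
  exact_mod_cast Nat.factorial_le h

lemma fact_pos_cast (k : ℕ) : (0:ℝ) < ((k ! : ℕ) : ℝ) := by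
  exact_mod_cast Nat.factorial_pos k

lemma two_le_three_pow (k : ℕ) : (2:ℝ)^k ≤ 3^k := by
  apply pow_le_pow_left₀ <;> norm_num

lemma one_le_three_pow (k : ℕ) : (1:ℝ) ≤ 3^k :=
  one_le_pow₀ (by norm_num : (1:ℝ) ≤ 3)

lemma Ecoef_bd (k : ℕ) : |Ecoef k| ≤ 1 * 3^k / k ! := by
  rw [Ecoef, abs_of_pos (by positivity), one_mul]
  apply div_le_div₀ (by positivity) (one_le_three_pow k) (fact_pos_cast k)
    (fact_le_fact_cast (by omega))

lemma A1coef_bd (k : ℕ) : |A1coef k| ≤ 1 * 3^k / k ! := by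
  rw [A1coef, abs_of_pos (by positivity), one_mul]
  apply div_le_div₀ (by positivity) ?_ (fact_pos_cast k) (fact_le_fact_cast (by omega))
  have h1 : (k:ℝ) + 1 ≤ 2^k := by
    exact_mod_cast Nat.lt_two_pow_self (n := k)
  exact h1.trans (two_le_three_pow k)

lemma A2coef_bd (k : ℕ) : |A2coef k| ≤ 5180 * 3^k / k ! := by
  have h2k := two_le_three_pow k
  have h1k := one_le_three_pow k
  have h2nn : (0:ℝ) ≤ 2^k := by positivity
  have e1 : |((2:ℝ)^(k+4)+1)/((k+4)! : ℝ)| ≤ 32 * 3^k / k ! := by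
    rw [abs_of_pos (by positivity)]
    apply div_le_div₀ (by positivity) ?_ (fact_pos_cast k) (fact_le_fact_cast (by omega))
    have : (2:ℝ)^(k+4) = 16*2^k := by ring
    nlinarith
  have e2 : |(6*(2:ℝ)^(k+7) - 2*3^(k+7) - 6)/((k+7)! : ℝ)| ≤ 5148 * 3^k / k ! := by
    rw [abs_div, abs_of_pos (fact_pos_cast (k+7))]
    apply div_le_div₀ (by positivity) ?_ (fact_pos_cast k) (fact_le_fact_cast (by omega))
    have p2 : (2:ℝ)^(k+7) = 128*2^k := by ring
    have p3 : (3:ℝ)^(k+7) = 2187*3^k := by ring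
    rw [abs_le]
    constructor <;> nlinarith
  calc |A2coef k|
      ≤ |((2:ℝ)^(k+4)+1)/((k+4)! : ℝ)|
        + |(6*(2:ℝ)^(k+7) - 2*3^(k+7) - 6)/((k+7)! : ℝ)| := abs_add_le _ _
    _ ≤ 32 * 3^k / k ! + 5148 * 3^k / k ! := add_le_add e1 e2
    _ = 5180 * 3^k / k ! := by ring

lemma Econt : Continuous (psum Ecoef) := psum_continuous Ecoef 1 Ecoef_bd
lemma A1cont : Continuous (psum A1coef) := psum_continuous A1coef 1 A1coef_bd
lemma A2cont : Continuous (psum A2coef) := psum_continuous A2coef 5180 A2coef_bd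

/-! The regular parts as continuous functions of `s = -log(1-t)`. -/

noncomputable def Gfun0 (α : ℝ) (s : ℝ) : ℝ :=
  (α * psum A1coef (α * s) / (2 * psum Ecoef (α * s))
    - psum A1coef s / (2*α*psum Ecoef s)) / psum Ecoef (-s)

noncomputable def Gfun2 (α : ℝ) (s : ℝ) : ℝ :=
  (α^4 * psum A2coef (α * s) / (psum Ecoef (α * s))^3
    - psum A2coef s / (psum Ecoef s)^3) / (α * psum Ecoef (-s))

lemma Gfun0_cont (α : ℝ) (hα : 0 < α) : Continuous (Gfun0 α) := by
  have hE : Continuous fun s : ℝ => psum Ecoef (α * s) :=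
    Econt.comp (continuous_const.mul continuous_id)
  have hA : Continuous fun s : ℝ => psum A1coef (α * s) :=
    A1cont.comp (continuous_const.mul continuous_id)
  have hEn : Continuous fun s : ℝ => psum Ecoef (-s) := Econt.comp continuous_neg
  apply Continuous.div _ hEn (fun s => (Epos (-s)).ne')
  apply Continuous.sub
  · exact (continuous_const.mul hA).div (continuous_const.mul hE)
      (fun s => (mul_pos two_pos (Epos _)).ne')
  · exact A1cont.div (continuous_const.mul Econt)
      (fun s => (mul_pos (mul_pos two_pos hα) (Epos _)).ne')

lemma Gfun2_cont (α : ℝ) (hα : 0 < α) : Continuous (Gfun2 α) := by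
  have hE : Continuous fun s : ℝ => psum Ecoef (α * s) :=
    Econt.comp (continuous_const.mul continuous_id)
  have hA : Continuous fun s : ℝ => psum A2coef (α * s) :=
    A2cont.comp (continuous_const.mul continuous_id)
  have hEn : Continuous fun s : ℝ => psum Ecoef (-s) := Econt.comp continuous_neg
  apply Continuous.div _ (continuous_const.mul hEn)
    (fun s => (mul_pos hα (Epos (-s))).ne')
  apply Continuous.sub
  · exact (continuous_const.mul hA).div (hE.pow 3)
      (fun s => pow_ne_zero 3 (Epos _).ne')
  · exact A2cont.div (Econt.pow 3) (fun s => pow_ne_zero 3 (Epos _).ne')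

/-! The geometric-type sum. -/

lemma tsum_sq_geometric {q : ℝ} (h0 : 0 ≤ q) (h1 : q < 1) :
    ∑' n : ℕ, (n:ℝ)^2 * q^n = q*(1+q)/(1-q)^3 := by
  have hnorm : ‖q‖ < 1 := by rw [Real.norm_eq_abs, abs_of_nonneg h0]; exact h1
  have hs : Summable (fun n : ℕ => (n:ℝ)^2 * q^n) := by
    have := summable_pow_mul_geometric_of_norm_lt_one (R := ℝ) 2 hnorm
    simpa using this
  set T := ∑' n : ℕ, (n:ℝ)^2 * q^n with hT
  have h := hs.hasSum
  have hshift : HasSum (fun n : ℕ => ((n:ℝ)+1)^2 * q^(n+1)) T := by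
    have h2 := (hasSum_nat_add_iff' (f := fun n : ℕ => (n:ℝ)^2 * q^n) 1).2 h
    convert h2 using 2 with n
    · rfl
    · push_cast; ring
    · simp [hT]
  have hq : HasSum (fun n : ℕ => q * ((n:ℝ)^2 * q^n)) (q*T) := h.mul_left q
  have hsub := hshift.sub hq
  have hknown := (((hasSum_coe_mul_geometric_of_norm_lt_one hnorm).mul_left 2).add
    (hasSum_geometric_of_norm_lt_one hnorm)).mul_left q
  have hsub' : HasSum (fun n : ℕ => q * (2 * ((n:ℝ) * q^n) + q^n)) (T - q*T) := by
    convert hsub using 2 with n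
    · rfl
    ring
  have heq : T - q*T = q * (2 * (q / (1-q)^2) + (1-q)⁻¹) := hsub'.unique hknown
  have hq1 : (1:ℝ) - q ≠ 0 := by linarith
  field_simp at heq ⊢
  nlinarith [heq]

lemma keysum (α : ℝ) (hα : 0 < α) {t : ℝ} (ht : t ∈ Set.Ioo (0:ℝ) 1) :
    (∑' n : ℕ, α^2 * (n:ℝ)^2 * (1-t) ^ ((n:ℝ)*α))
      = α^2 * ((1-t)^α * (1+(1-t)^α)/(1-(1-t)^α)^3) := by
  obtain ⟨ht0, ht1⟩ := ht
  have h1t0 : (0:ℝ) ≤ 1 - t := by linarith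
  set q : ℝ := (1-t)^α with hqdef
  have hq0 : 0 ≤ q := Real.rpow_nonneg h1t0 α
  have hq1 : q < 1 := Real.rpow_lt_one h1t0 (by linarith) hα
  have hterm : ∀ n : ℕ, α^2 * (n:ℝ)^2 * (1-t) ^ ((n:ℝ)*α) = α^2 * ((n:ℝ)^2 * q^n) := by
    intro n
    rw [mul_comm (n:ℝ) α, Real.rpow_mul h1t0, ← hqdef, Real.rpow_natCast]
    ring
  calc (∑' n : ℕ, α^2 * (n:ℝ)^2 * (1-t) ^ ((n:ℝ)*α))
      = ∑' n : ℕ, α^2 * ((n:ℝ)^2 * q^n) := tsum_congr hterm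
    _ = α^2 * ∑' n : ℕ, (n:ℝ)^2 * q^n := tsum_mul_left
    _ = α^2 * (q*(1+q)/(1-q)^3) := by rw [tsum_sq_geometric hq0 hq1]

/-! The two key algebraic identities on `(0,1)`. -/

lemma key0 (α : ℝ) (hα : 0 < α) {t : ℝ} (ht : t ∈ Set.Ioo (0:ℝ) 1) :
    (1/t) * (1/(1-(1-t)^α) - 1/(α*t) + (1-α)/(2*α))
      = Gfun0 α (-Real.log (1-t)) := by
  rw [Gfun0]
  obtain ⟨ht0, ht1⟩ := ht
  have h1t : (0:ℝ) < 1 - t := by linarith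
  set s : ℝ := -Real.log (1-t) with hsdef
  have hs : 0 < s := by
    rw [hsdef, neg_pos]
    exact Real.log_neg h1t (by linarith)
  have hs0 : s ≠ 0 := hs.ne'
  have hα0 : α ≠ 0 := hα.ne'
  have ht0' : t ≠ 0 := ht0.ne'
  have hexps : Real.exp (-s) = 1 - t := by
    rw [hsdef, neg_neg, Real.exp_log h1t]
  set Y : ℝ := Real.exp s with hYdef
  set X : ℝ := Real.exp (α*s) with hXdef
  have hY1 : 1 < Y := Real.one_lt_exp_iff.2 hs
  have hX1 : 1 < X := Real.one_lt_exp_iff.2 (by positivity)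
  have hY0 : Y ≠ 0 := by positivity
  have hX0 : X ≠ 0 := by positivity
  have hYm1 : Y - 1 ≠ 0 := sub_ne_zero.2 hY1.ne'
  have hXm1 : X - 1 ≠ 0 := sub_ne_zero.2 hX1.ne'
  have hEns : psum Ecoef (-s) = t / s := by
    rw [E_eq (neg_ne_zero.2 hs0), hexps]
    field_simp
    ring
  have hEs : psum Ecoef s = (Y - 1)/s := E_eq hs0
  have hEas : psum Ecoef (α*s) = (X - 1)/(α*s) := E_eq (by positivity)
  have hA1s : psum A1coef s = (s + 2 - 2*Y + s*Y)/s^3 := A1_eq hs0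
  have hA1as : psum A1coef (α*s) = (α*s + 2 - 2*X + (α*s)*X)/(α*s)^3 :=
    A1_eq (by positivity)
  have hrp : (1-t)^α = X⁻¹ := by
    rw [← hexps, ← Real.exp_neg, Real.rpow_def_of_pos (Real.exp_pos _), Real.log_exp]
    ring_nf
  have hty : t = (Y - 1)/Y := by
    have h : 1 - t = Y⁻¹ := by
      rw [← hexps, Real.exp_neg, hYdef]
    field_simp at h ⊢
    linarith
  rw [hrp, hEns, hEs, hEas, hA1s, hA1as]
  rw [hty]
  field_simp
  ring

set_option maxHeartbeats 2000000 in
lemma key2 (α : ℝ) (hα : 0 < α) {t : ℝ} (ht : t ∈ Set.Ioo (0:ℝ) 1) :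
    (1/t) * (α^2 * ((1-t)^α * (1+(1-t)^α)/(1-(1-t)^α)^3) - (1-t)*(2-t)/(α*t^3))
      = Gfun2 α (-Real.log (1-t)) := by
  rw [Gfun2]
  obtain ⟨ht0, ht1⟩ := ht
  have h1t : (0:ℝ) < 1 - t := by linarith
  set s : ℝ := -Real.log (1-t) with hsdef
  have hs : 0 < s := by
    rw [hsdef, neg_pos]
    exact Real.log_neg h1t (by linarith)
  have hs0 : s ≠ 0 := hs.ne'
  have hα0 : α ≠ 0 := hα.ne'
  have ht0' : t ≠ 0 := ht0.ne'
  have hexps : Real.exp (-s) = 1 - t := by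
    rw [hsdef, neg_neg, Real.exp_log h1t]
  set Y : ℝ := Real.exp s with hYdef
  set X : ℝ := Real.exp (α*s) with hXdef
  have hY1 : 1 < Y := Real.one_lt_exp_iff.2 hs
  have hX1 : 1 < X := Real.one_lt_exp_iff.2 (by positivity)
  have hY0 : Y ≠ 0 := by positivity
  have hX0 : X ≠ 0 := by positivity
  have hYm1 : Y - 1 ≠ 0 := sub_ne_zero.2 hY1.ne'
  have hXm1 : X - 1 ≠ 0 := sub_ne_zero.2 hX1.ne'
  have hEns : psum Ecoef (-s) = t / s := by
    rw [E_eq (neg_ne_zero.2 hs0), hexps]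
    field_simp
    ring
  have hEs : psum Ecoef s = (Y - 1)/s := E_eq hs0
  have hEas : psum Ecoef (α*s) = (X - 1)/(α*s) := E_eq (by positivity)
  have hA2s : psum A2coef s = (s^3*(Y^2 + Y) - 2*(Y - 1)^3)/s^7 := A2_eq hs0
  have hA2as : psum A2coef (α*s) = ((α*s)^3*(X^2 + X) - 2*(X - 1)^3)/(α*s)^7 :=
    A2_eq (by positivity)
  have hrp : (1-t)^α = X⁻¹ := by
    rw [← hexps, ← Real.exp_neg, Real.rpow_def_of_pos (Real.exp_pos _), Real.log_exp]
    ring_nf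
  have hty : t = (Y - 1)/Y := by
    have h : 1 - t = Y⁻¹ := by
      rw [← hexps, Real.exp_neg, hYdef]
    field_simp at h ⊢
    linarith
  rw [hrp, hEns, hEs, hEas, hA2s, hA2as]
  rw [hty]
  field_simp
  ring

/-- `ĥ_{0,α}` and `ĥ_{2,α}` extend continuously to `[0,1]`, and the integral
`∫₀¹ (ĥ_{2,α}(t) - (1/4)ĥ_{0,α}(t))·(1-t)^{-1/2} dt` is finite. -/
theorem hhat_continuous_extension (α : ℝ) (hα : 0 < α) :
    (∃ g0 : ℝ → ℝ, ContinuousOn g0 (Set.Icc 0 1) ∧ ∀ t ∈ Set.Ioo (0:ℝ) 1,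
      g0 t = (1/t) * (1/(1-(1-t)^α) - 1/(α*t) + (1-α)/(2*α))) ∧
    (∃ g2 : ℝ → ℝ, ContinuousOn g2 (Set.Icc 0 1) ∧ ∀ t ∈ Set.Ioo (0:ℝ) 1,
      g2 t = (1/t) * ((∑' n : ℕ, α^2 * (n:ℝ)^2 * (1-t) ^ ((n:ℝ)*α))
        - (1-t)*(2-t)/(α*t^3))) ∧
    MeasureTheory.IntegrableOn (fun t : ℝ =>
      ((1/t) * ((∑' n : ℕ, α^2 * (n:ℝ)^2 * (1-t) ^ ((n:ℝ)*α)) - (1-t)*(2-t)/(α*t^3))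
        - (1/4) * ((1/t) * (1/(1-(1-t)^α) - 1/(α*t) + (1-α)/(2*α))))
        * (1-t) ^ (-(1/2) : ℝ))
      (Set.Ioo 0 1) := by
  have hα0 : α ≠ 0 := hα.ne'
  -- the candidate extensions
  set f0 : ℝ → ℝ := fun t =>
    (1/t) * (1/(1-(1-t)^α) - 1/(α*t) + (1-α)/(2*α)) with hf0def
  set f2 : ℝ → ℝ := fun t =>
    (1/t) * (α^2 * ((1-t)^α * (1+(1-t)^α)/(1-(1-t)^α)^3) - (1-t)*(2-t)/(α*t^3)) with hf2def
  set g0 : ℝ → ℝ := fun t => if t = 0 then Gfun0 α 0 else f0 t with hg0def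
  set g2 : ℝ → ℝ := fun t => if t = 0 then Gfun2 α 0 else f2 t with hg2def
  -- continuity of `S`
  have hScont : ContinuousAt (fun t : ℝ => -Real.log (1-t)) 0 := by
    have : ContinuousAt (fun t : ℝ => Real.log (1-t)) 0 := by
      apply (Real.continuousAt_log (by norm_num)).comp
      exact (continuous_const.sub continuous_id).continuousAt
    exact this.neg
  have hS0 : -Real.log (1-(0:ℝ)) = 0 := by simp
  -- basic facts on `Ioc 0 1`
  have hbase : ∀ t₀ ∈ Set.Ioc (0:ℝ) 1, ContinuousAt (fun t : ℝ => (1-t)^α) t₀ ∧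
      (1-(1-t₀)^α) ≠ 0 := by
    intro t₀ ht₀
    obtain ⟨htA, htB⟩ := ht₀
    constructor
    · exact (Real.continuousAt_rpow_const _ _ (Or.inr hα.le)).comp
        ((continuous_const.sub continuous_id).continuousAt)
    · have hlt : (1-t₀)^α < 1 :=
        Real.rpow_lt_one (by linarith) (by linarith) hα
      intro hcon
      have : (1-t₀)^α = 1 := by linarith [sub_eq_zero.1 hcon]
      linarith
  -- continuity of f0 on Ioc
  have hf0cont : ∀ t₀ ∈ Set.Ioc (0:ℝ) 1, ContinuousAt f0 t₀ := by
    intro t₀ ht₀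
    obtain ⟨hrc, hden⟩ := hbase t₀ ht₀
    have ht0ne : t₀ ≠ 0 := ht₀.1.ne'
    rw [hf0def]
    apply ContinuousAt.mul
    · exact continuousAt_const.div continuousAt_id ht0ne
    · apply ContinuousAt.add
      · apply ContinuousAt.sub
        · exact continuousAt_const.div (continuousAt_const.sub hrc) hden
        · exact continuousAt_const.div
            ((continuous_const.mul continuous_id).continuousAt)
            (by simp [ht0ne, hα0])
      · exact continuousAt_const
  -- continuity of f2 on Ioc
  have hf2cont : ∀ t₀ ∈ Set.Ioc (0:ℝ) 1, ContinuousAt f2 t₀ := by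
    intro t₀ ht₀
    obtain ⟨hrc, hden⟩ := hbase t₀ ht₀
    have ht0ne : t₀ ≠ 0 := ht₀.1.ne'
    rw [hf2def]
    apply ContinuousAt.mul
    · exact continuousAt_const.div continuousAt_id ht0ne
    · apply ContinuousAt.sub
      · apply ContinuousAt.mul continuousAt_const
        · exact (hrc.mul (continuousAt_const.add hrc)).div
            ((continuousAt_const.sub hrc).pow 3) (pow_ne_zero 3 hden)
      · apply ContinuousAt.div
        · exact ((continuous_const.sub continuous_id).continuousAt).mul
            ((continuous_const.sub continuous_id).continuousAt)
        · exact (continuous_const.mul (continuous_pow 3)).continuousAt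
        · simp [ht0ne, hα0]
  -- the glued functions are continuous on Icc
  have hg0cont : ContinuousOn g0 (Set.Icc 0 1) := by
    intro t₀ ht₀
    rcases eq_or_ne t₀ 0 with rfl | htne
    · -- at 0 : compare with Gfun0 ∘ S
      have hc : ContinuousWithinAt (fun t => Gfun0 α (-Real.log (1-t)))
          (Set.Icc (0:ℝ) 1) 0 :=
        (((Gfun0_cont α hα).continuousAt).comp hScont).continuousWithinAt
      apply hc.congr_of_eventuallyEq
      · filter_upwards [eventually_nhdsWithin_of_eventually_nhds
          (eventually_lt_nhds one_pos), self_mem_nhdsWithin] with t htlt htmem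
        rcases eq_or_ne t 0 with rfl | htne0
        · simp [hg0def, hS0]
        · have htIoo : t ∈ Set.Ioo (0:ℝ) 1 := ⟨lt_of_le_of_ne htmem.1 (Ne.symm htne0), htlt⟩
          rw [hg0def]
          simp only [if_neg htne0]
          exact key0 α hα htIoo
      · simp [hg0def, hS0]
    · have ht₀' : t₀ ∈ Set.Ioc (0:ℝ) 1 :=
        ⟨lt_of_le_of_ne ht₀.1 (Ne.symm htne), ht₀.2⟩
      have hc := ((hf0cont t₀ ht₀').continuousWithinAt
        (s := Set.Icc (0:ℝ) 1))
      apply hc.congr_of_eventuallyEq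
      · filter_upwards [eventually_nhdsWithin_of_eventually_nhds
          (eventually_ne_nhds htne)] with t htne0
        rw [hg0def]
        simp only [if_neg htne0]
      · rw [hg0def]; simp only [if_neg htne]
  have hg2cont : ContinuousOn g2 (Set.Icc 0 1) := by
    intro t₀ ht₀
    rcases eq_or_ne t₀ 0 with rfl | htne
    · have hc : ContinuousWithinAt (fun t => Gfun2 α (-Real.log (1-t)))
          (Set.Icc (0:ℝ) 1) 0 :=
        (((Gfun2_cont α hα).continuousAt).comp hScont).continuousWithinAt
      apply hc.congr_of_eventuallyEq
      · filter_upwards [eventually_nhdsWithin_of_eventually_nhds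
          (eventually_lt_nhds one_pos), self_mem_nhdsWithin] with t htlt htmem
        rcases eq_or_ne t 0 with rfl | htne0
        · simp [hg2def, hS0]
        · have htIoo : t ∈ Set.Ioo (0:ℝ) 1 := ⟨lt_of_le_of_ne htmem.1 (Ne.symm htne0), htlt⟩
          rw [hg2def]
          simp only [if_neg htne0]
          exact key2 α hα htIoo
      · simp [hg2def, hS0]
    · have ht₀' : t₀ ∈ Set.Ioc (0:ℝ) 1 :=
        ⟨lt_of_le_of_ne ht₀.1 (Ne.symm htne), ht₀.2⟩
      have hc := ((hf2cont t₀ ht₀').continuousWithinAt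
        (s := Set.Icc (0:ℝ) 1))
      apply hc.congr_of_eventuallyEq
      · filter_upwards [eventually_nhdsWithin_of_eventually_nhds
          (eventually_ne_nhds htne)] with t htne0
        rw [hg2def]
        simp only [if_neg htne0]
      · rw [hg2def]; simp only [if_neg htne]
  -- the representation properties
  have hg0rep : ∀ t ∈ Set.Ioo (0:ℝ) 1,
      g0 t = (1/t) * (1/(1-(1-t)^α) - 1/(α*t) + (1-α)/(2*α)) := by
    intro t ht
    rw [hg0def]
    simp only [if_neg ht.1.ne']
    rfl
  have hg2rep : ∀ t ∈ Set.Ioo (0:ℝ) 1,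
      g2 t = (1/t) * ((∑' n : ℕ, α^2 * (n:ℝ)^2 * (1-t) ^ ((n:ℝ)*α))
        - (1-t)*(2-t)/(α*t^3)) := by
    intro t ht
    rw [hg2def]
    simp only [if_neg ht.1.ne']
    rw [keysum α hα ht]
  refine ⟨⟨g0, hg0cont, hg0rep⟩, ⟨g2, hg2cont, hg2rep⟩, ?_⟩
  -- integrability
  set w : ℝ → ℝ := fun t => (1-t) ^ (-(1/2) : ℝ) with hwdef
  have hwInt : MeasureTheory.IntegrableOn w (Set.Ioo (0:ℝ) 1) := by
    have h1 : IntervalIntegrable (fun x : ℝ => x ^ (-(1/2):ℝ)) MeasureTheory.volume 0 1 :=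
      intervalIntegral.intervalIntegrable_rpow' (by norm_num)
    have h2 := (h1.comp_sub_left 1).symm
    rw [show (1:ℝ) - 1 = 0 by norm_num, show (1:ℝ) - 0 = 1 by norm_num] at h2
    rw [intervalIntegrable_iff_integrableOn_Ioc_of_le (by norm_num)] at h2
    exact h2.mono_set Set.Ioo_subset_Ioc_self
  have hwcont : ContinuousOn w (Set.Ioo (0:ℝ) 1) := by
    intro t ht
    apply ContinuousAt.continuousWithinAt
    rw [hwdef]
    have hne : (1:ℝ) - t ≠ 0 := by
      have := ht.2; intro h; nlinarith [sub_eq_zero.1 h]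
    exact (Real.continuousAt_rpow_const _ _ (Or.inl hne)).comp
      ((continuous_const.sub continuous_id).continuousAt)
  have hgd : ContinuousOn (fun t => g2 t - (1/4) * g0 t) (Set.Icc (0:ℝ) 1) :=
    hg2cont.sub (continuousOn_const.mul hg0cont)
  obtain ⟨C, hC⟩ := (isCompact_Icc (a := (0:ℝ)) (b := 1)).exists_bound_of_continuousOn hgd
  have hGint : MeasureTheory.IntegrableOn
      (fun t => (g2 t - (1/4) * g0 t) * w t) (Set.Ioo (0:ℝ) 1) := by
    apply MeasureTheory.Integrable.mono' (hwInt.const_mul |C|)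
    · exact (((hgd.mono Set.Ioo_subset_Icc_self).mul hwcont).aestronglyMeasurable
        measurableSet_Ioo)
    · filter_upwards [MeasureTheory.ae_restrict_mem measurableSet_Ioo] with t ht
      have hw0 : 0 ≤ w t := Real.rpow_nonneg (by linarith [ht.2]) _
      have hb := hC t (Set.Ioo_subset_Icc_self ht)
      rw [norm_mul, Real.norm_eq_abs (w t), abs_of_nonneg hw0]
      exact mul_le_mul_of_nonneg_right
        (hb.trans (le_abs_self C)) hw0
  apply hGint.congr_fun _ measurableSet_Ioo
  intro t ht
  simp only []
  rw [hg0rep t ht, hg2rep t ht]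
end
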